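/- arXiv:1311.5697 — 6 statements merged into one kernel-verified Lean document; each statement's English description precedes it below -/
import Mathlib

section
/- For a signature λ = (λ_1 ≥ ⋯ ≥ λ_N) of length N, let w_λ : ℝ → ℝ be the unique continuous piecewise linear function such that: its slope may change only at integer points; w_λ'(x) = ±1 for all non-integer x; w_λ(x) = x for x ≥ λ_1 and w_λ(x) = x + 2N for x ≤ λ_N − N; and inside (λ_N − N, λ_1) the slope equals −1 exactly on the N unit intervals whose midpoints are λ_i − i + 1/2, i = 1, …, N. For each N let λ(N) be a random signature of length N, and assume the random measures μ_{λ(N)} := (1/N) ∑_{i=1}^N δ((λ_i(N) − i + 1/2)/N) converge weakly in probability, as N → ∞, to a nonrandom probability measure σ supported in a bounded interval [a, b], with density p (so 0 ≤ p ≤ 1 a.e., p = 0 outside [a, b]). Then the random functions x ↦ (1/N) w_{λ(N)}(Nx) converge uniformly in probability (i.e. sup_{x ∈ ℝ} |(1/N) w_{λ(N)}(Nx) − w(x)| → 0 in probability) to the nonrandom function w uniquely determined by: w(x) = x for x > b, w(x) = x + 2 for x < a, and w'(x) = 1 − 2p(x) for almost every x ∈ [a, b]. -/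
open MeasureTheory Filter

/-- The continuous piecewise linear function `w_λ` associated with a signature
`λ = (λ_1 ≥ ⋯ ≥ λ_N)` (indexed here by `i : Fin N`, so `λ_{i+1} = l i`): it is the
unique continuous piecewise linear function whose slope changes only at integers,
equals `±1` off the integers, with `w_λ(x) = x` for `x ≥ λ_1`, `w_λ(x) = x + 2N` for
`x ≤ λ_N - N`, and slope `-1` exactly on the `N` unit intervals with midpoints
`λ_i - i + 1/2`.  Explicitly, the `i`-th descending unit interval contributes
`2 · max 0 (min 1 (λ_i - i + 1 - x))` to `w_λ(x) - x`. -/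
noncomputable def wSig (N : ℕ) (l : Fin N → ℤ) (x : ℝ) : ℝ :=
  x + ∑ i : Fin N, 2 * max 0 (min 1 ((l i : ℝ) - (i : ℝ) - x))

namespace SSCUP

lemma cl_nonneg (t : ℝ) : 0 ≤ max 0 (min 1 t) := le_max_left _ _
lemma cl_le_one (t : ℝ) : max 0 (min 1 t) ≤ 1 :=
  max_le zero_le_one (min_le_left _ _)
lemma cl_mono {s t : ℝ} (h : s ≤ t) : max 0 (min 1 s) ≤ max 0 (min 1 t) :=
  max_le_max le_rfl (min_le_min le_rfl h)
lemma cl_of_nonpos {t : ℝ} (h : t ≤ 0) : max 0 (min 1 t) = 0 :=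
  max_eq_left ((min_le_right _ _).trans h)
lemma cl_of_one_le {t : ℝ} (h : 1 ≤ t) : max 0 (min 1 t) = 1 := by
  rw [min_eq_left h]; exact max_eq_right zero_le_one

noncomputable def ramp (u η : ℝ) : BoundedContinuousFunction ℝ ℝ :=
  BoundedContinuousFunction.mkOfBound
    ⟨fun t => max 0 (min 1 ((t - u) / η)), by fun_prop⟩ 1
    (fun s t => by
      rw [Real.dist_eq]
      have h1 := cl_nonneg ((s - u)/η)
      have h2 := cl_le_one ((s - u)/η)
      have h3 := cl_nonneg ((t - u)/η)
      have h4 := cl_le_one ((t - u)/η)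
      simp only [ContinuousMap.coe_mk]
      rw [abs_le]; constructor <;> linarith)

lemma ramp_apply (u η t : ℝ) : ramp u η t = max 0 (min 1 ((t - u) / η)) := rfl
lemma ramp_nonneg (u η t : ℝ) : 0 ≤ ramp u η t := cl_nonneg _
lemma ramp_le_one (u η t : ℝ) : ramp u η t ≤ 1 := cl_le_one _
lemma ramp_eq_zero {u η t : ℝ} (hη : 0 < η) (h : t ≤ u) : ramp u η t = 0 :=
  cl_of_nonpos (div_nonpos_of_nonpos_of_nonneg (by linarith) hη.le)
lemma ramp_eq_one {u η t : ℝ} (hη : 0 < η) (h : u + η ≤ t) : ramp u η t = 1 :=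
  cl_of_one_le ((one_le_div hη).mpr (by linarith))

/-- scaled counting function -/
noncomputable def FN (N : ℕ) (l : Fin N → ℤ) (x : ℝ) : ℝ :=
  (N : ℝ)⁻¹ * ∑ i : Fin N, max 0 (min 1 ((l i : ℝ) - (i : ℝ) - N * x))

lemma FN_anti (N : ℕ) (l : Fin N → ℤ) {x y : ℝ} (h : x ≤ y) : FN N l y ≤ FN N l x := by
  refine mul_le_mul_of_nonneg_left (Finset.sum_le_sum fun i _ => cl_mono ?_)
    (by positivity)
  have : (N:ℝ) * x ≤ (N:ℝ) * y := mul_le_mul_of_nonneg_left h (Nat.cast_nonneg N)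
  linarith

lemma FN_nonneg (N : ℕ) (l : Fin N → ℤ) (x : ℝ) : 0 ≤ FN N l x :=
  mul_nonneg (by positivity) (Finset.sum_nonneg fun i _ => cl_nonneg _)

lemma FN_le_one (N : ℕ) (l : Fin N → ℤ) (x : ℝ) : FN N l x ≤ 1 := by
  rcases Nat.eq_zero_or_pos N with rfl | hN
  · simp [FN]
  have hsum : ∑ i : Fin N, max 0 (min 1 ((l i : ℝ) - (i : ℝ) - N * x)) ≤ (N : ℝ) := by
    calc ∑ i : Fin N, max 0 (min 1 ((l i : ℝ) - (i : ℝ) - N * x))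
        ≤ ∑ _i : Fin N, (1:ℝ) := Finset.sum_le_sum fun i _ => cl_le_one _
      _ = (N : ℝ) := by simp
  rw [FN]
  calc (N : ℝ)⁻¹ * ∑ i : Fin N, max 0 (min 1 ((l i : ℝ) - (i : ℝ) - N * x))
      ≤ (N : ℝ)⁻¹ * (N : ℝ) :=
        mul_le_mul_of_nonneg_left hsum (by positivity)
    _ = 1 := inv_mul_cancel₀ (by positivity)

/-- per-term sandwich -/
lemma term_sandwich {η x c : ℝ} {N : ℕ} (hη : 0 < η) (hN : 1 ≤ 2 * (N:ℝ) * η) :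
    ramp (x + η) η ((c - 1/2) / N) ≤ max 0 (min 1 (c - N * x)) ∧
    max 0 (min 1 (c - N * x)) ≤ ramp (x - 2*η) η ((c - 1/2) / N) := by
  have hNpos : (0:ℝ) < N := by nlinarith
  have hNy : (N:ℝ) * ((c - 1/2) / N) = c - 1/2 := by field_simp
  set y := (c - 1/2) / N with hy
  have hkey : c - (N:ℝ) * x = (N:ℝ) * (y - x) + 1/2 := by
    rw [mul_sub, hNy]; ring
  have hhalf : 1 / (2 * (N:ℝ)) ≤ η := by
    rw [div_le_iff₀ (by positivity)]; nlinarith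
  constructor
  · rcases le_or_gt y (x + η) with h | h
    · rw [ramp_eq_zero hη h]; exact cl_nonneg _
    · have : (1:ℝ) ≤ c - N * x := by
        rw [hkey]; nlinarith
      rw [cl_of_one_le this]; exact ramp_le_one _ _ _
  · rcases le_or_gt y (x - 1/(2*(N:ℝ))) with h | h
    · have : c - (N:ℝ) * x ≤ 0 := by
        rw [hkey]
        have : (N:ℝ) * (y - x) ≤ (N:ℝ) * (-(1/(2*(N:ℝ)))) :=
          mul_le_mul_of_nonneg_left (by linarith) hNpos.le
        have h2 : (N:ℝ) * (-(1/(2*(N:ℝ)))) = -(1/2) := by field_simp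
        linarith [h2 ▸ this]
      rw [cl_of_nonpos this]; exact ramp_nonneg _ _ _
    · have : (x - 2*η) + η ≤ y := by linarith
      rw [ramp_eq_one hη this]; exact cl_le_one _

/-- sandwich for FN between empirical integrals of ramps -/
lemma FN_sandwich {η x : ℝ} {N : ℕ} (l : Fin N → ℤ) (hη : 0 < η)
    (hN : 1 ≤ 2 * (N:ℝ) * η) :
    (N : ℝ)⁻¹ * ∑ i : Fin N, ramp (x + η) η (((l i : ℝ) - (i : ℝ) - 1/2) / N)
      ≤ FN N l x ∧
    FN N l x ≤
      (N : ℝ)⁻¹ * ∑ i : Fin N, ramp (x - 2*η) η (((l i : ℝ) - (i : ℝ) - 1/2) / N) := by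
  constructor
  · refine mul_le_mul_of_nonneg_left (Finset.sum_le_sum fun i _ => ?_) (by positivity)
    have := (term_sandwich (x := x) (c := (l i : ℝ) - (i : ℝ)) hη hN).1
    convert this using 3 <;> ring
  · refine mul_le_mul_of_nonneg_left (Finset.sum_le_sum fun i _ => ?_) (by positivity)
    have := (term_sandwich (x := x) (c := (l i : ℝ) - (i : ℝ)) hη hN).2
    convert this using 3 <;> ring

set_option linter.unusedSectionVars false
set_option linter.unusedVariables false


variable {a b : ℝ} {p : ℝ → ℝ} {σ : Measure ℝ} [IsProbabilityMeasure σ]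

lemma sigma_Ioc_le (hdens : σ = volume.withDensity fun x => ENNReal.ofReal (p x))
    (hp01 : ∀ᵐ x ∂(volume : Measure ℝ), 0 ≤ p x ∧ p x ≤ 1)
    {u v : ℝ} (huv : u ≤ v) : σ (Set.Ioc u v) ≤ ENNReal.ofReal (v - u) := by
  rw [hdens, withDensity_apply _ measurableSet_Ioc]
  calc ∫⁻ x in Set.Ioc u v, ENNReal.ofReal (p x) ∂volume
      ≤ ∫⁻ _ in Set.Ioc u v, 1 ∂volume := by
        refine lintegral_mono_ae ?_
        filter_upwards [ae_restrict_of_ae hp01] with x hx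
        exact ENNReal.ofReal_le_one.mpr hx.2
    _ = ENNReal.ofReal (v - u) := by
        rw [setLIntegral_one, Real.volume_Ioc]

lemma G_anti {u v : ℝ} (huv : u ≤ v) : σ (Set.Ioi v) ≤ σ (Set.Ioi u) :=
  measure_mono (Set.Ioi_subset_Ioi huv)

lemma G_le_one (u : ℝ) : (σ (Set.Ioi u)).toReal ≤ 1 := by
  have := measure_mono (Set.subset_univ (Set.Ioi u)) (μ := σ)
  rw [measure_univ] at this
  exact ENNReal.toReal_le_of_le_ofReal zero_le_one (by simpa using this)

lemma G_lip (hdens : σ = volume.withDensity fun x => ENNReal.ofReal (p x))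
    (hp01 : ∀ᵐ x ∂(volume : Measure ℝ), 0 ≤ p x ∧ p x ≤ 1)
    {u v : ℝ} (huv : u ≤ v) :
    (σ (Set.Ioi u)).toReal ≤ (σ (Set.Ioi v)).toReal + (v - u) := by
  have hsub : Set.Ioi u ⊆ Set.Ioi v ∪ Set.Ioc u v := by
    intro x hx
    rcases le_or_gt x v with h | h
    · exact Or.inr ⟨hx, h⟩
    · exact Or.inl h
  have h1 : σ (Set.Ioi u) ≤ σ (Set.Ioi v) + ENNReal.ofReal (v - u) :=
    le_trans (measure_mono hsub) (le_trans (measure_union_le _ _)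
      (add_le_add le_rfl (sigma_Ioc_le hdens hp01 huv)))
  have h2 : (σ (Set.Ioi v) + ENNReal.ofReal (v - u)).toReal
      = (σ (Set.Ioi v)).toReal + (v - u) := by
    rw [ENNReal.toReal_add (measure_ne_top _ _) ENNReal.ofReal_ne_top,
      ENNReal.toReal_ofReal (by linarith)]
  calc (σ (Set.Ioi u)).toReal ≤ (σ (Set.Ioi v) + ENNReal.ofReal (v - u)).toReal :=
        ENNReal.toReal_mono (by finiteness) h1
    _ = _ := h2

lemma sigma_Ici_eq (hdens : σ = volume.withDensity fun x => ENNReal.ofReal (p x))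
    (u : ℝ) : σ (Set.Ici u) = σ (Set.Ioi u) := by
  have hac : σ ≪ volume := hdens ▸ withDensity_absolutelyContinuous _ _
  have h0 : σ {u} = 0 := hac (Real.volume_singleton)
  have : Set.Ici u = {u} ∪ Set.Ioi u := by
    ext x; simp [le_iff_lt_or_eq, eq_comm, or_comm]
  rw [this]
  refine le_antisymm (le_trans (measure_union_le _ _) (by rw [h0, zero_add])) ?_
  exact measure_mono Set.subset_union_right

lemma G_eq_one (hdens : σ = volume.withDensity fun x => ENNReal.ofReal (p x))
    (hpout : ∀ x, x ∉ Set.Icc a b → p x = 0)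
    {x : ℝ} (hx : x < a) : (σ (Set.Ioi x)).toReal = 1 := by
  have hIic : σ (Set.Iic x) = 0 := by
    rw [hdens, withDensity_apply _ measurableSet_Iic]
    have : ∀ᵐ t ∂(volume.restrict (Set.Iic x)), ENNReal.ofReal (p t) = 0 := by
      filter_upwards [ae_restrict_mem measurableSet_Iic] with t ht
      rw [hpout t (fun h => absurd (lt_of_lt_of_le hx h.1) (not_lt.mpr ht))]
      simp
    rw [lintegral_congr_ae this, lintegral_zero]
  have := measure_add_measure_compl (μ := σ) (measurableSet_Iic (a := x))
  rw [measure_univ, hIic, zero_add, Set.compl_Iic] at this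
  rw [this]; simp

lemma G_eq_zero (hdens : σ = volume.withDensity fun x => ENNReal.ofReal (p x))
    (hpout : ∀ x, x ∉ Set.Icc a b → p x = 0)
    {x : ℝ} (hx : b < x) : σ (Set.Ioi x) = 0 := by
  rw [hdens, withDensity_apply _ measurableSet_Ioi]
  have : ∀ᵐ t ∂(volume.restrict (Set.Ioi x)), ENNReal.ofReal (p t) = 0 := by
    filter_upwards [ae_restrict_mem measurableSet_Ioi] with t ht
    rw [hpout t (fun h => absurd h.2 (not_le.mpr (lt_trans hx ht)))]
    simp
  rw [lintegral_congr_ae this, lintegral_zero]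

/-- upper bound for integral of a [0,1]-valued function vanishing below u -/
lemma integral_le_measure_Ici (f : BoundedContinuousFunction ℝ ℝ)
    (h1 : ∀ t, f t ≤ 1) (h0 : ∀ t, t < u → f t = 0) :
    ∫ x, f x ∂σ ≤ (σ (Set.Ici u)).toReal := by
  have hind : ∀ t, f t ≤ Set.indicator (Set.Ici u) (fun _ => (1:ℝ)) t := by
    intro t
    rcases le_or_gt u t with h | h
    · rw [Set.indicator_of_mem (Set.mem_Ici.mpr h)]; exact h1 t
    · rw [Set.indicator_of_notMem (by simpa using h), h0 t h]
  calc ∫ x, f x ∂σ ≤ ∫ x, Set.indicator (Set.Ici u) (fun _ => (1:ℝ)) x ∂σ :=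
        integral_mono (f.integrable σ)
          ((integrable_const (1:ℝ)).indicator measurableSet_Ici) hind
    _ = (σ (Set.Ici u)).toReal := by
        rw [integral_indicator_const _ measurableSet_Ici]; simp; rfl

lemma measure_Ici_le_integral (f : BoundedContinuousFunction ℝ ℝ)
    (h0 : ∀ t, 0 ≤ f t) (h1 : ∀ t, u ≤ t → f t = 1) :
    (σ (Set.Ici u)).toReal ≤ ∫ x, f x ∂σ := by
  have hind : ∀ t, Set.indicator (Set.Ici u) (fun _ => (1:ℝ)) t ≤ f t := by
    intro t
    rcases le_or_gt u t with h | h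
    · rw [Set.indicator_of_mem (Set.mem_Ici.mpr h), h1 t h]
    · rw [Set.indicator_of_notMem (by simpa using h)]; exact h0 t
  calc (σ (Set.Ici u)).toReal
      = ∫ x, Set.indicator (Set.Ici u) (fun _ => (1:ℝ)) x ∂σ := by
        rw [integral_indicator_const _ measurableSet_Ici]; simp; rfl
    _ ≤ ∫ x, f x ∂σ :=
        integral_mono ((integrable_const (1:ℝ)).indicator measurableSet_Ici)
          (f.integrable σ) hind


lemma grid_det {p : ℝ → ℝ} {σ : Measure ℝ} [IsProbabilityMeasure σ]
    (hdens : σ = volume.withDensity fun x => ENNReal.ofReal (p x))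
    (hp01 : ∀ᵐ x ∂(volume : Measure ℝ), 0 ≤ p x ∧ p x ≤ 1)
    {η ε₁ u : ℝ} (hη : 0 < η) {N : ℕ} {l : Fin N → ℤ}
    (hN1 : 1 ≤ 2 * (N:ℝ) * η)
    (h1 : |(N:ℝ)⁻¹ * ∑ i : Fin N, ramp (u - 2*η) η (((l i : ℝ) - (i : ℝ) - 1/2) / N)
          - ∫ x, ramp (u - 2*η) η x ∂σ| ≤ ε₁)
    (h2 : |(N:ℝ)⁻¹ * ∑ i : Fin N, ramp (u + η) η (((l i : ℝ) - (i : ℝ) - 1/2) / N)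
          - ∫ x, ramp (u + η) η x ∂σ| ≤ ε₁) :
    |FN N l u - (σ (Set.Ioi u)).toReal| ≤ 2*η + ε₁ := by
  obtain ⟨hlow, hup⟩ := FN_sandwich (x := u) l hη hN1
  have habs1 := abs_le.mp h1
  have habs2 := abs_le.mp h2
  -- upper bound
  have hIσup : ∫ x, ramp (u - 2*η) η x ∂σ ≤ (σ (Set.Ici (u - 2*η))).toReal :=
    integral_le_measure_Ici _ (ramp_le_one _ _) (fun t ht => ramp_eq_zero hη ht.le)
  have hGup : (σ (Set.Ici (u - 2*η))).toReal ≤ (σ (Set.Ioi u)).toReal + 2*η := by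
    rw [sigma_Ici_eq hdens]
    have := G_lip (σ := σ) hdens hp01 (u := u - 2*η) (v := u) (by linarith)
    linarith
  -- lower bound
  have hIσlow : (σ (Set.Ici (u + 2*η))).toReal ≤ ∫ x, ramp (u + η) η x ∂σ :=
    measure_Ici_le_integral _ (ramp_nonneg _ _) (fun t ht => ramp_eq_one hη (by linarith))
  have hGlow : (σ (Set.Ioi u)).toReal - 2*η ≤ (σ (Set.Ici (u + 2*η))).toReal := by
    rw [sigma_Ici_eq hdens]
    have := G_lip (σ := σ) hdens hp01 (u := u) (v := u + 2*η) (by linarith)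
    linarith
  rw [abs_le]
  constructor <;> linarith

lemma main_det {a b : ℝ} (hab : a ≤ b) {p : ℝ → ℝ} {σ : Measure ℝ}
    [IsProbabilityMeasure σ]
    (hdens : σ = volume.withDensity fun x => ENNReal.ofReal (p x))
    (hp01 : ∀ᵐ x ∂(volume : Measure ℝ), 0 ≤ p x ∧ p x ≤ 1)
    (hpout : ∀ x, x ∉ Set.Icc a b → p x = 0)
    {η ε₁ : ℝ} (hη : 0 < η) (hε₁ : 0 ≤ ε₁) {N : ℕ} {l : Fin N → ℤ}
    (hN1 : 1 ≤ 2 * (N:ℝ) * η)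
    (H : ∀ k : ℕ, k ≤ ⌈(b - a + 2)/η⌉₊ →
      |(N:ℝ)⁻¹ * ∑ i : Fin N, ramp ((a - 1 + k*η) - 2*η) η (((l i : ℝ) - (i : ℝ) - 1/2) / N)
          - ∫ x, ramp ((a - 1 + k*η) - 2*η) η x ∂σ| ≤ ε₁ ∧
      |(N:ℝ)⁻¹ * ∑ i : Fin N, ramp ((a - 1 + k*η) + η) η (((l i : ℝ) - (i : ℝ) - 1/2) / N)
          - ∫ x, ramp ((a - 1 + k*η) + η) η x ∂σ| ≤ ε₁) :
    ∀ x : ℝ, |FN N l x - (σ (Set.Ioi x)).toReal| ≤ 3*η + ε₁ := by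
  set M := ⌈(b - a + 2)/η⌉₊ with hM
  set g : ℕ → ℝ := fun k => a - 1 + k*η with hg
  have hgrid : ∀ k : ℕ, k ≤ M → |FN N l (g k) - (σ (Set.Ioi (g k))).toReal| ≤ 2*η + ε₁ :=
    fun k hk => grid_det hdens hp01 hη hN1 (H k hk).1 (H k hk).2
  have hM1 : 1 ≤ M := by
    rw [hM, Nat.one_le_iff_ne_zero, ← Nat.pos_iff_ne_zero, Nat.ceil_pos]
    exact div_pos (by linarith) hη
  have hgM : b < g M := by
    have h1 : (b - a + 2)/η ≤ (M : ℝ) := Nat.le_ceil _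
    have h2 : b - a + 2 ≤ (M:ℝ) * η := by
      rw [div_le_iff₀ hη] at h1; linarith
    simp only [hg]; linarith
  intro x
  rcases le_or_gt x (g 0) with hx | hx0
  · -- left tail
    have hxa : x < a := by
      have : g 0 = a - 1 := by simp [hg]
      rw [this] at hx; linarith
    have hGx : (σ (Set.Ioi x)).toReal = 1 := G_eq_one hdens hpout hxa
    have hG0 : (σ (Set.Ioi (g 0))).toReal = 1 := by
      refine G_eq_one hdens hpout ?_
      simp only [hg]; push_cast; linarith
    have h0 := hgrid 0 (Nat.zero_le M)
    rw [hG0] at h0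
    have h0' := abs_le.mp h0
    have hmono := FN_anti N l hx
    have hle := FN_le_one N l x
    rw [hGx, abs_le]
    constructor <;> linarith
  rcases le_or_gt (g M) x with hx | hxM
  · -- right tail
    have hbx : b < x := lt_of_lt_of_le hgM hx
    have hGx : (σ (Set.Ioi x)).toReal = 0 := by
      rw [G_eq_zero hdens hpout hbx]; simp
    have hGM : (σ (Set.Ioi (g M))).toReal = 0 := by
      rw [G_eq_zero hdens hpout hgM]; simp
    have hM0 := hgrid M le_rfl
    rw [hGM] at hM0
    have hM0' := abs_le.mp hM0
    have hmono := FN_anti N l hx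
    have hge := FN_nonneg N l x
    rw [hGx, abs_le]
    constructor <;> linarith
  · -- middle
    have hx0' : g 0 ≤ x := hx0.le
    have hxM' : x ≤ g M := hxM.le
    have hq0 : (0:ℝ) ≤ (x - (a-1))/η := by
      have : g 0 = a - 1 := by simp [hg]
      rw [this] at hx0'
      exact div_nonneg (by linarith) hη.le
    set k0 := ⌊(x - (a-1))/η⌋₊ with hk0
    set k := min k0 (M - 1) with hk
    have hkM : k + 1 ≤ M := by
      have : k ≤ M - 1 := min_le_right _ _
      omega
    have hgk : g k ≤ x := by
      have h1 : (k:ℝ) ≤ (x - (a-1))/η := by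
        calc (k:ℝ) ≤ (k0:ℝ) := by exact_mod_cast Nat.cast_le.mpr (min_le_left _ _)
          _ ≤ (x - (a-1))/η := Nat.floor_le hq0
      have h2 : (k:ℝ) * η ≤ x - (a-1) := by
        rw [← le_div_iff₀ hη]; exact h1
      simp only [hg]; linarith
    have hgk1 : x ≤ g (k+1) := by
      rcases le_or_gt k0 (M-1) with h | h
      · have hkk : k = k0 := min_eq_left h
        have h1 : (x - (a-1))/η < (k0:ℝ) + 1 := Nat.lt_floor_add_one _
        have h2 : x - (a-1) < ((k0:ℝ) + 1) * η := by
          rw [← div_lt_iff₀ hη]; exact h1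
        simp only [hg, hkk]
        push_cast
        linarith
      · have hkk : k = M - 1 := min_eq_right h.le
        have : k + 1 = M := by omega
        rw [this]; exact hxM'
    have hstep : g (k+1) = g k + η := by
      simp only [hg]; push_cast; ring
    have hk1 := hgrid k (le_trans (min_le_right _ _) (Nat.sub_le _ _))
    have hk2 := hgrid (k+1) hkM
    have hk1' := abs_le.mp hk1
    have hk2' := abs_le.mp hk2
    have hlip1 : (σ (Set.Ioi (g k))).toReal ≤ (σ (Set.Ioi x)).toReal + η := by
      have := G_lip (σ := σ) hdens hp01 hgk
      have hxgk : x - g k ≤ η := by rw [hstep] at hgk1; linarith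
      linarith
    have hlip2 : (σ (Set.Ioi x)).toReal ≤ (σ (Set.Ioi (g (k+1)))).toReal + η := by
      have := G_lip (σ := σ) hdens hp01 hgk1
      have : (σ (Set.Ioi x)).toReal ≤ (σ (Set.Ioi (g (k+1)))).toReal + (g (k+1) - x) :=
        this
      have hxgk : g (k+1) - x ≤ η := by rw [hstep] at hgk1 ⊢; linarith
      linarith
    have hm1 := FN_anti N l hgk
    have hm2 := FN_anti N l hgk1
    rw [abs_le]
    constructor <;> linarith

end SSCUP

namespace SSCUP

lemma wSig_eq {N : ℕ} (hN : 0 < N) (l : Fin N → ℤ) (x : ℝ) :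
    (N:ℝ)⁻¹ * wSig N l ((N:ℝ) * x) = x + 2 * FN N l x := by
  have hN0 : (N:ℝ) ≠ 0 := Nat.cast_ne_zero.mpr hN.ne'
  rw [wSig, FN, ← Finset.mul_sum]
  field_simp

end SSCUP


/-- If the random measures `μ_{λ(N)}` of random signatures `λ(N)`
converge weakly in probability to a nonrandom probability measure `σ` supported in
`[a,b]` with density `p` (`0 ≤ p ≤ 1` a.e., `p = 0` outside `[a,b]`), then the scaled
shapes `x ↦ (1/N) w_{λ(N)}(Nx)` converge uniformly in probability to the nonrandom
function `w(x) = x + 2σ((x,∞))`, which is the unique function with `w(x) = x` for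
`x > b`, `w(x) = x + 2` for `x < a`, and `w' = 1 - 2p` a.e. on `[a,b]`. -/
theorem scaled_shapes_converge_uniformly_in_probability
    (Ω : ℕ → Type) [∀ N, MeasurableSpace (Ω N)]
    (P : ∀ N, Measure (Ω N)) [∀ N, IsProbabilityMeasure (P N)]
    (lam : ∀ N : ℕ, Ω N → Fin N → ℤ)
    (hmeas : ∀ N (i : Fin N), Measurable (fun ω => lam N ω i))
    (hdec : ∀ N (ω : Ω N) (i j : Fin N), i ≤ j → lam N ω j ≤ lam N ω i)
    (a b : ℝ) (hab : a ≤ b)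
    (p : ℝ → ℝ) (hp : Measurable p)
    (σ : Measure ℝ) [IsProbabilityMeasure σ]
    (hdens : σ = volume.withDensity fun x => ENNReal.ofReal (p x))
    (hp01 : ∀ᵐ x ∂(volume : Measure ℝ), 0 ≤ p x ∧ p x ≤ 1)
    (hpout : ∀ x, x ∉ Set.Icc a b → p x = 0)
    (hconv : ∀ f : BoundedContinuousFunction ℝ ℝ, ∀ ε > (0 : ℝ),
      Tendsto (fun N =>
          P N {ω | ε < |(N : ℝ)⁻¹ *
            ∑ i : Fin N, f ((((lam N ω i : ℝ) - (i : ℝ) - 1/2)) / N) - ∫ x, f x ∂σ|})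
        atTop (nhds 0)) :
    ∀ ε > (0 : ℝ),
      Tendsto (fun N =>
          P N {ω | ε < ⨆ x : ℝ,
            |(N : ℝ)⁻¹ * wSig N (lam N ω) (N * x) - (x + 2 * (σ (Set.Ioi x)).toReal)|})
        atTop (nhds 0) := by
  intro ε hε
  set η := ε/16 with hηdef
  have hη : 0 < η := by positivity
  set M := ⌈(b - a + 2)/η⌉₊ with hMdef
  -- the two families of test functions
  set fp : ℕ → BoundedContinuousFunction ℝ ℝ :=
    fun k => SSCUP.ramp ((a - 1 + k*η) - 2*η) η with hfp
  set fm : ℕ → BoundedContinuousFunction ℝ ℝ :=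
    fun k => SSCUP.ramp ((a - 1 + k*η) + η) η with hfm
  set Ap : (k : ℕ) → (N : ℕ) → Set (Ω N) := fun k N => {ω : Ω N | η < |(N : ℝ)⁻¹ *
      ∑ i : Fin N, fp k ((((lam N ω i : ℝ) - (i : ℝ) - 1/2)) / N) - ∫ x, fp k x ∂σ|}
    with hAp
  set Am : (k : ℕ) → (N : ℕ) → Set (Ω N) := fun k N => {ω : Ω N | η < |(N : ℝ)⁻¹ *
      ∑ i : Fin N, fm k ((((lam N ω i : ℝ) - (i : ℝ) - 1/2)) / N) - ∫ x, fm k x ∂σ|}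
    with hAm
  have key : ∀ N : ℕ, 1 ≤ 2*(N:ℝ)*η →
      P N {ω | ε < ⨆ x : ℝ,
        |(N : ℝ)⁻¹ * wSig N (lam N ω) (N * x) - (x + 2 * (σ (Set.Ioi x)).toReal)|}
      ≤ ∑ k ∈ Finset.range (M+1), (P N (Ap k N) + P N (Am k N)) := by
    intro N hN1
    have hNpos : 0 < N := by
      by_contra h
      push_neg at h
      interval_cases N
      simp at hN1
      linarith
    have hsub : {ω : Ω N | ε < ⨆ x : ℝ,
        |(N : ℝ)⁻¹ * wSig N (lam N ω) (N * x) - (x + 2 * (σ (Set.Ioi x)).toReal)|}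
        ⊆ ⋃ k ∈ Finset.range (M+1), (Ap k N ∪ Am k N) := by
      intro ω hω
      by_contra hc
      simp only [Set.mem_iUnion, Set.mem_union, not_exists, not_or, Finset.mem_range] at hc
      have H : ∀ k : ℕ, k ≤ M →
          |(N:ℝ)⁻¹ * ∑ i : Fin N,
              SSCUP.ramp ((a - 1 + k*η) - 2*η) η (((lam N ω i : ℝ) - (i : ℝ) - 1/2) / N)
            - ∫ x, SSCUP.ramp ((a - 1 + k*η) - 2*η) η x ∂σ| ≤ η ∧
          |(N:ℝ)⁻¹ * ∑ i : Fin N,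
              SSCUP.ramp ((a - 1 + k*η) + η) η (((lam N ω i : ℝ) - (i : ℝ) - 1/2) / N)
            - ∫ x, SSCUP.ramp ((a - 1 + k*η) + η) η x ∂σ| ≤ η := by
        intro k hk
        have := hc k (by omega)
        exact ⟨not_lt.mp this.1, not_lt.mp this.2⟩
      have hdet := SSCUP.main_det hab hdens hp01 hpout hη hη.le hN1 H
      have hsup : (⨆ x : ℝ,
          |(N : ℝ)⁻¹ * wSig N (lam N ω) (N * x) - (x + 2 * (σ (Set.Ioi x)).toReal)|)
          ≤ ε/2 := by
        refine Real.iSup_le (fun x => ?_) (by positivity)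
        have heq : (N : ℝ)⁻¹ * wSig N (lam N ω) ((N:ℝ) * x)
            - (x + 2 * (σ (Set.Ioi x)).toReal)
            = 2 * (SSCUP.FN N (lam N ω) x - (σ (Set.Ioi x)).toReal) := by
          rw [SSCUP.wSig_eq hNpos]; ring
        rw [heq, abs_mul, abs_two]
        have := hdet x
        rw [hηdef] at this
        linarith
      exact absurd hω (not_lt.mpr (hsup.trans (by linarith)))
    calc P N {ω : Ω N | ε < ⨆ x : ℝ,
          |(N : ℝ)⁻¹ * wSig N (lam N ω) (N * x) - (x + 2 * (σ (Set.Ioi x)).toReal)|}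
        ≤ P N (⋃ k ∈ Finset.range (M+1), (Ap k N ∪ Am k N)) := measure_mono hsub
      _ ≤ ∑ k ∈ Finset.range (M+1), P N (Ap k N ∪ Am k N) :=
          measure_biUnion_finset_le _ _
      _ ≤ ∑ k ∈ Finset.range (M+1), (P N (Ap k N) + P N (Am k N)) :=
          Finset.sum_le_sum fun k _ => measure_union_le _ _
  have hsum : Tendsto (fun N => ∑ k ∈ Finset.range (M+1), (P N (Ap k N) + P N (Am k N)))
      atTop (nhds 0) := by
    have h0 : (0 : ENNReal) = ∑ _k ∈ Finset.range (M+1), ((0:ENNReal) + 0) := by simp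
    rw [h0]
    refine tendsto_finset_sum _ fun k _ => ?_
    exact (hconv (fp k) η hη).add (hconv (fm k) η hη)
  refine tendsto_of_tendsto_of_tendsto_of_le_of_le' tendsto_const_nhds hsum
    (Eventually.of_forall fun N => zero_le) ?_
  filter_upwards [eventually_ge_atTop (⌈1/(2*η)⌉₊ + 1)] with N hN
  refine key N ?_
  have h1 : (1/(2*η) : ℝ) ≤ (N:ℝ) := by
    calc (1/(2*η) : ℝ) ≤ (⌈1/(2*η)⌉₊ : ℝ) := Nat.le_ceil _
      _ ≤ (N:ℝ) := by exact_mod_cast Nat.le_of_succ_le hN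
  rw [div_le_iff₀ (by positivity)] at h1
  nlinarith
end

section
/- Let λ = (λ_1 ≥ ⋯ ≥ λ_N) be a signature of length N, let μ_λ := (1/N) ∑_{i=1}^N δ((λ_i − i + 1/2)/N), and let w_λ : ℝ → ℝ be the continuous piecewise linear function of slope ±1 associated with λ (w_λ(x) = x for x ≥ λ_1, w_λ(x) = x + 2N for x ≤ λ_N − N, slope −1 exactly on the N unit intervals with midpoints λ_i − i + 1/2). Define w̃_λ(x) := x + 2 μ_λ((x, +∞)). Then for all x ∈ ℝ, |w̃_λ(x) − (1/N) w_λ(Nx)| ≤ 1/N. -/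
open MeasureTheory

/-- For a signature `λ` of length `N ≥ 1`, with
`μ_λ = (1/N) ∑ δ((λ_i - i + 1/2)/N)` and `w̃_λ(x) = x + 2 μ_λ((x,∞))`, one has
`|w̃_λ(x) - (1/N) w_λ(Nx)| ≤ 1/N` for all real `x`.  Here
`μ_λ((x,∞)) = (1/N)·#{i : (λ_i - i + 1/2)/N > x}`. -/
theorem tilde_w_close_to_scaled_shape
    (N : ℕ) (hN : 1 ≤ N) (lam : Fin N → ℤ)
    (hdec : ∀ i j : Fin N, i ≤ j → lam j ≤ lam i) :
    ∀ x : ℝ,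
      |(x + 2 * (((Finset.univ.filter
            (fun i : Fin N => x < ((lam i : ℝ) - (i : ℝ) - 1/2) / N)).card : ℝ) / N))
        - (N : ℝ)⁻¹ * wSig N lam (N * x)| ≤ 1 / N := by
  intro x
  have hN0 : (0:ℝ) < N := by exact_mod_cast hN
  have hNne : (N:ℝ) ≠ 0 := ne_of_gt hN0
  set y : ℝ := N * x with hy
  set s : Fin N → ℝ := fun i => (lam i : ℝ) - (i : ℝ) - y with hs
  set f : Fin N → ℝ := fun i => max 0 (min 1 (s i)) with hf
  set χ : Fin N → ℝ := fun i => if 1/2 < s i then 1 else 0 with hχ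
  clear_value y s f χ
  -- card as a sum of indicators
  have hfilter : Finset.univ.filter
      (fun i : Fin N => x < ((lam i : ℝ) - (i : ℝ) - 1/2) / N)
      = Finset.univ.filter (fun i : Fin N => 1/2 < s i) := by
    apply Finset.filter_congr
    intro i _
    rw [lt_div_iff₀ hN0]
    simp only [hs, hy]
    constructor <;> intro h <;> nlinarith
  have hcard : ((Finset.univ.filter
      (fun i : Fin N => x < ((lam i : ℝ) - (i : ℝ) - 1/2) / N)).card : ℝ)
      = ∑ i, χ i := by
    rw [hfilter, hχ]
    rw [Finset.sum_boole]
  -- the exceptional set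
  set S : Finset (Fin N) := Finset.univ.filter (fun i => 0 < s i ∧ s i < 1) with hS
  have hg0 : ∀ i ∈ Finset.univ, i ∉ S → χ i - f i = 0 := by
    intro i _ hiS
    simp only [hS, Finset.mem_filter, Finset.mem_univ, true_and, not_and_or, not_lt] at hiS
    simp only [hχ, hf]
    rcases hiS with h | h
    · rw [if_neg (not_lt.mpr (by linarith)),
        max_eq_left (by simp [min_le_iff]; right; linarith)]
      ring
    · rw [if_pos (by linarith), min_eq_left (by linarith),
        max_eq_right (by norm_num)]
      ring
  have hsum : ∑ i, (χ i - f i) = ∑ i ∈ S, (χ i - f i) :=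
    (Finset.sum_subset (Finset.subset_univ S) hg0).symm
  have hgb : ∀ i ∈ S, |χ i - f i| ≤ 1/2 := by
    intro i hi
    simp only [hS, Finset.mem_filter, Finset.mem_univ, true_and] at hi
    obtain ⟨h0, h1⟩ := hi
    have hfi : f i = s i := by
      simp only [hf]
      rw [min_eq_right (le_of_lt h1), max_eq_right (le_of_lt h0)]
    rw [hfi]
    simp only [hχ]
    by_cases h : 1/2 < s i
    · rw [if_pos h, abs_of_nonneg (by linarith)]; linarith
    · rw [if_neg h, abs_of_nonpos (by linarith)]
      push_neg at h; linarith
  have hScard : S.card ≤ 1 := by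
    rw [Finset.card_le_one]
    intro a ha b hb
    simp only [hS, Finset.mem_filter, Finset.mem_univ, true_and, hs] at ha hb
    have hab : lam a - (a : ℤ) = lam b - (b : ℤ) := by
      have h1 : |((lam a - (a:ℤ)) - (lam b - (b:ℤ)) : ℤ)| < 1 := by
        have : |(((lam a - (a:ℤ)) - (lam b - (b:ℤ)) : ℤ) : ℝ)| < 1 := by
          push_cast
          rw [abs_lt]
          constructor <;> [linarith [ha.1, hb.2]; linarith [ha.2, hb.1]]
        exact_mod_cast this
      rw [abs_lt] at h1
      omega
    by_contra hne
    rcases lt_or_gt_of_ne hne with h | h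
    · have h2 := hdec a b (le_of_lt h)
      have h3 : (a : ℤ) < (b : ℤ) := by exact_mod_cast h
      omega
    · have h2 := hdec b a (le_of_lt h)
      have h3 : (b : ℤ) < (a : ℤ) := by exact_mod_cast h
      omega
  have key : |∑ i, (χ i - f i)| ≤ 1/2 := by
    rw [hsum]
    calc |∑ i ∈ S, (χ i - f i)| ≤ ∑ i ∈ S, |χ i - f i| :=
          Finset.abs_sum_le_sum_abs _ _
      _ ≤ ∑ i ∈ S, (1/2 : ℝ) := Finset.sum_le_sum hgb
      _ = S.card * (1/2) := by rw [Finset.sum_const, nsmul_eq_mul]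
      _ ≤ 1 * (1/2) := by
          apply mul_le_mul_of_nonneg_right _ (by norm_num)
          exact_mod_cast hScard
      _ = 1/2 := by norm_num
  have heq : x + 2 * ((∑ i, χ i) / N)
      - (N : ℝ)⁻¹ * wSig N lam y
      = 2/N * ∑ i, (χ i - f i) := by
    unfold wSig
    rw [Finset.sum_sub_distrib]
    have h2 : ∑ i : Fin N, 2 * max 0 (min 1 ((lam i : ℝ) - (i : ℝ) - y))
        = 2 * ∑ i, f i := by
      rw [Finset.mul_sum]
      simp [hf, hs]
    rw [h2, hy]
    field_simp
    ring
  rw [hcard, heq, abs_mul, abs_of_nonneg (by positivity : (0:ℝ) ≤ 2/N)]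
  calc 2/(N:ℝ) * |∑ i, (χ i - f i)| ≤ 2/N * (1/2) := by
        apply mul_le_mul_of_nonneg_left key (by positivity)
    _ = 1/N := by ring
end

section
/- For each N ≥ 1, let ω(N) = (α^+(N), α^−(N), β^+(N), β^−(N), γ^+(N), γ^−(N)) be a sextuple where α_1^±(N) ≥ α_2^±(N) ≥ ⋯ ≥ 0 and β_1^±(N) ≥ β_2^±(N) ≥ ⋯ ≥ 0 are nonincreasing summable sequences of nonnegative reals with β_1^+(N) + β_1^−(N) ≤ 1, and γ^±(N) ≥ 0. Define, for z in a small complex disc around 0, L_N(z) := γ^+(N) z + γ^−(N)(1/(z+1) − 1) + ∑_{i≥1} log(1 + β_i^+(N) z) − ∑_{i≥1} log(1 − α_i^+(N) z) + ∑_{i≥1} log(1 − β_i^−(N) z/(1+z)) − ∑_{i≥1} log(1 + α_i^−(N) z/(1+z)), using the principal branch of the logarithm. Assume: (a) γ^+(N)/N and γ^−(N)/N converge as N → ∞; (b) the measures A_N^± := (1/N) ∑_{i≥1} δ(α_i^±(N)) and B_N^± := (1/N) ∑_{i≥1} δ(β_i^±(N)) converge weakly to finite compactly supported measures on ℝ;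 (c) there is C_1 > 0 with α_i^±(N) < C_1 and β_i^±(N) < C_1 for all i, N; (d) there is C_2 > 0 such that, for each N, the number of nonzero parameters among the α_i^±(N) and β_i^±(N) is at most C_2 N. Then there exist ε > 0 and a function P analytic on {z ∈ ℂ : |z| ≤ ε} such that (1/N) L_N(z) converges to P(z) uniformly on {|z| ≤ ε} as N → ∞. -/
open Filter MeasureTheory

namespace VoicAux


/-- Uniform convergence of power-series-type sums with converging coefficients. -/
lemma UL (a : ℕ → ℕ → ℂ) (b : ℕ → ℂ) (M q ρ : ℝ) (hM : 0 ≤ M) (hq : 0 ≤ q)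
    (hρ : 0 ≤ ρ) (hqρ : q * ρ < 1)
    (hbnd : ∀ N k, ‖a N k‖ ≤ M * q ^ k)
    (hconv : ∀ k, Tendsto (fun N => a N k) atTop (nhds (b k))) :
    TendstoUniformlyOn (fun (N : ℕ) (w : ℂ) => ∑' k, a N k * w ^ (k + 1))
      (fun w => ∑' k, b k * w ^ (k + 1)) atTop (Metric.closedBall 0 ρ) := by
  have hqρ0 : 0 ≤ q * ρ := mul_nonneg hq hρ
  have hbb : ∀ k, ‖b k‖ ≤ M * q ^ k := fun k =>
    le_of_tendsto (hconv k).norm (Eventually.of_forall fun N => hbnd N k)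
  have hterm : ∀ (c : ℕ → ℂ), (∀ k, ‖c k‖ ≤ M * q ^ k) → ∀ (w : ℂ), ‖w‖ ≤ ρ → ∀ k,
      ‖c k * w ^ (k + 1)‖ ≤ (M * ρ) * (q * ρ) ^ k := by
    intro c hc w hw k
    rw [norm_mul, norm_pow]
    calc ‖c k‖ * ‖w‖ ^ (k + 1) ≤ (M * q ^ k) * ρ ^ (k + 1) :=
          mul_le_mul (hc k) (pow_le_pow_left₀ (norm_nonneg w) hw _)
            (pow_nonneg (norm_nonneg _) _) (by positivity)
      _ = (M * ρ) * (q * ρ) ^ k := by rw [mul_pow, pow_succ]; ring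
  have hgeo : Summable (fun k : ℕ => (M * ρ) * (q * ρ) ^ k) :=
    (summable_geometric_of_lt_one hqρ0 hqρ).mul_left _
  have hsum : ∀ (c : ℕ → ℂ), (∀ k, ‖c k‖ ≤ M * q ^ k) → ∀ (w : ℂ), ‖w‖ ≤ ρ →
      Summable (fun k => c k * w ^ (k + 1)) := fun c hc w hw =>
    Summable.of_norm_bounded hgeo (hterm c hc w hw)
  have hdiff : ∀ N k, ‖a N k - b k‖ ≤ 2 * M * q ^ k := by
    intro N k
    calc ‖a N k - b k‖ ≤ ‖a N k‖ + ‖b k‖ := norm_sub_le _ _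
      _ ≤ M * q ^ k + M * q ^ k := add_le_add (hbnd N k) (hbb k)
      _ = 2 * M * q ^ k := by ring
  set D : ℕ → ℝ := fun N => ∑' k, ‖a N k - b k‖ * ρ ^ (k + 1) with hD
  have hDsum : ∀ N, Summable (fun k => ‖a N k - b k‖ * ρ ^ (k + 1)) := by
    intro N
    refine Summable.of_norm_bounded
      ((summable_geometric_of_lt_one hqρ0 hqρ).mul_left (2 * M * ρ)) (fun k => ?_)
    rw [Real.norm_eq_abs, abs_of_nonneg (by positivity)]
    calc ‖a N k - b k‖ * ρ ^ (k + 1) ≤ (2 * M * q ^ k) * ρ ^ (k + 1) := by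
          gcongr; exact hdiff N k
      _ = (2 * M * ρ) * (q * ρ) ^ k := by rw [mul_pow, pow_succ]; ring
  have htD : Tendsto D atTop (nhds 0) := by
    have h0 : (0 : ℝ) = ∑' (k : ℕ), (0 : ℝ) := by simp
    rw [hD, h0]
    refine tendsto_tsum_of_dominated_convergence
      (bound := fun k : ℕ => (2 * M * ρ) * (q * ρ) ^ k)
      ((summable_geometric_of_lt_one hqρ0 hqρ).mul_left _) (fun k => ?_)
      (Eventually.of_forall fun N k => ?_)
    · have h1 : Tendsto (fun N => a N k - b k) atTop (nhds 0) := by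
        simpa using (hconv k).sub (tendsto_const_nhds (x := b k))
      have h2 : Tendsto (fun N => ‖a N k - b k‖) atTop (nhds 0) := by
        simpa using h1.norm
      simpa using h2.mul_const (ρ ^ (k + 1))
    · rw [Real.norm_eq_abs, abs_of_nonneg (by positivity)]
      calc ‖a N k - b k‖ * ρ ^ (k + 1) ≤ (2 * M * q ^ k) * ρ ^ (k + 1) := by
            gcongr; exact hdiff N k
        _ = (2 * M * ρ) * (q * ρ) ^ k := by rw [mul_pow, pow_succ]; ring
  rw [Metric.tendstoUniformlyOn_iff]
  intro δ hδ
  filter_upwards [htD.eventually_lt_const hδ] with N hN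
  intro w hw
  rw [Metric.mem_closedBall, dist_zero_right] at hw
  have hsa := hsum (a N) (hbnd N) w hw
  have hsb := hsum b hbb w hw
  have hle : ∀ k, ‖b k * w ^ (k + 1) - a N k * w ^ (k + 1)‖ ≤ ‖a N k - b k‖ * ρ ^ (k + 1) := by
    intro k
    rw [← sub_mul, norm_mul, norm_pow, norm_sub_rev]
    gcongr
  have hsn : Summable (fun k => ‖b k * w ^ (k + 1) - a N k * w ^ (k + 1)‖) :=
    (hDsum N).of_nonneg_of_le (fun k => norm_nonneg _) hle
  rw [dist_eq_norm, ← Summable.tsum_sub hsb hsa]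
  calc ‖∑' k, (b k * w ^ (k + 1) - a N k * w ^ (k + 1))‖
      ≤ ∑' k, ‖b k * w ^ (k + 1) - a N k * w ^ (k + 1)‖ := norm_tsum_le_tsum_norm hsn
    _ ≤ D N := Summable.tsum_le_tsum hle hsn (hDsum N)
    _ < δ := hN



/-- Analyticity of the limit series. -/
lemma DL (b : ℕ → ℂ) (M q ρ : ℝ) (hM : 0 ≤ M) (hq : 0 ≤ q) (hρ : 0 ≤ ρ)
    (hqρ : q * ρ < 1) (hbb : ∀ k, ‖b k‖ ≤ M * q ^ k) :
    AnalyticOnNhd ℂ (fun w : ℂ => ∑' k, b k * w ^ (k + 1)) (Metric.ball 0 ρ) := by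
  have hqρ0 : 0 ≤ q * ρ := mul_nonneg hq hρ
  have hd : DifferentiableOn ℂ (fun w : ℂ => ∑' k, b k * w ^ (k + 1)) (Metric.ball 0 ρ) := by
    refine Complex.differentiableOn_tsum_of_summable_norm
      (u := fun k : ℕ => (M * ρ) * (q * ρ) ^ k)
      ((summable_geometric_of_lt_one hqρ0 hqρ).mul_left _)
      (fun k => ((differentiable_const _).mul (differentiable_pow _)).differentiableOn)
      Metric.isOpen_ball (fun k w hw => ?_)
    rw [Metric.mem_ball, dist_zero_right] at hw
    rw [norm_mul, norm_pow]
    calc ‖b k‖ * ‖w‖ ^ (k + 1) ≤ (M * q ^ k) * ρ ^ (k + 1) :=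
          mul_le_mul (hbb k) (pow_le_pow_left₀ (norm_nonneg w) hw.le _)
            (pow_nonneg (norm_nonneg _) _) (by positivity)
      _ = (M * ρ) * (q * ρ) ^ k := by rw [mul_pow, pow_succ]; ring
  exact hd.analyticOnNhd Metric.isOpen_ball

/-- Uniform convergence of scalar multiples. -/
lemma gammaUL (c : ℕ → ℝ) (c₀ : ℝ) (hc : Tendsto c atTop (nhds c₀)) (g : ℂ → ℂ) (B : ℝ)
    (hB : 0 ≤ B) (s : Set ℂ) (hg : ∀ z ∈ s, ‖g z‖ ≤ B) :
    TendstoUniformlyOn (fun (N : ℕ) (z : ℂ) => (c N : ℂ) * g z)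
      (fun z => (c₀ : ℂ) * g z) atTop s := by
  rw [Metric.tendstoUniformlyOn_iff]
  intro δ hδ
  have hpos : (0 : ℝ) < B + 1 := by linarith
  have h1 : Tendsto (fun N => |c N - c₀|) atTop (nhds 0) := by
    have := (hc.sub (tendsto_const_nhds (x := c₀))).abs
    simpa using this
  filter_upwards [h1.eventually_lt_const (div_pos hδ hpos)] with N hN
  intro z hz
  have : dist ((c₀ : ℂ) * g z) ((c N : ℂ) * g z) = |c N - c₀| * ‖g z‖ := by
    rw [dist_eq_norm, ← sub_mul, norm_mul]
    congr 1
    rw [← Complex.ofReal_sub, Complex.norm_real, Real.norm_eq_abs, abs_sub_comm]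
  rw [this]
  calc |c N - c₀| * ‖g z‖ ≤ |c N - c₀| * B :=
        mul_le_mul_of_nonneg_left (hg z hz) (abs_nonneg _)
    _ ≤ |c N - c₀| * (B + 1) := by nlinarith [abs_nonneg (c N - c₀)]
    _ < (δ / (B + 1)) * (B + 1) := by
        exact mul_lt_mul_of_pos_right hN hpos
    _ = δ := div_mul_cancel₀ _ (ne_of_gt hpos)





lemma log_series {u : ℂ} (hu : ‖u‖ < 1) :
    HasSum (fun k : ℕ => (-1 : ℂ) ^ k * u ^ (k + 1) / (k + 1)) (Complex.log (1 + u)) := by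
  have h := Complex.hasSum_taylorSeries_log hu
  have h' : HasSum (fun n : ℕ => (-1 : ℂ) ^ (n + 1 + 1) * u ^ (n + 1) / ((n + 1 : ℕ) : ℂ))
      (Complex.log (1 + u)) := by
    rw [hasSum_nat_add_iff (f := fun n : ℕ => (-1 : ℂ) ^ (n + 1) * u ^ n / (n : ℂ)) 1]
    simpa using h
  convert h' using 2 with k
  have : (-1 : ℂ) ^ (k + 1 + 1) = (-1 : ℂ) ^ k := by
    rw [pow_succ, pow_succ]; ring
  rw [this]
  push_cast
  ring

/-- A bounded continuous function equal to `x ^ (k+1)` on `[0, C₁]`. -/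
noncomputable def testFun (C₁ : ℝ) (hC₁ : 0 < C₁) (k : ℕ) : BoundedContinuousFunction ℝ ℝ :=
  BoundedContinuousFunction.ofNormedAddCommGroup
    (fun x => (max 0 (min x C₁)) ^ (k + 1))
    (((continuous_const.max (continuous_id.min continuous_const))).pow _)
    (C₁ ^ (k + 1))
    (by
      intro x
      have h0 : 0 ≤ max 0 (min x C₁) := le_max_left _ _
      have h1 : max 0 (min x C₁) ≤ C₁ := max_le hC₁.le (min_le_right _ _)
      rw [Real.norm_eq_abs, abs_of_nonneg (pow_nonneg h0 _)]
      exact pow_le_pow_left₀ h0 h1 _)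

lemma testFun_eval (C₁ : ℝ) (hC₁ : 0 < C₁) (k : ℕ) {x : ℝ} (h0 : 0 ≤ x) (h1 : x ≤ C₁) :
    testFun C₁ hC₁ k x = x ^ (k + 1) := by
  show (max 0 (min x C₁)) ^ (k + 1) = x ^ (k + 1)
  rw [min_eq_left h1, max_eq_right h0]

/-- Per-family analysis: series expansion and coefficient convergence. -/
lemma family (c : ℕ → ℕ → ℝ) (s : ℝ) (hs : s = 1 ∨ s = -1)
    (C₁ C₂ : ℝ) (hC₁ : 0 < C₁) (hC₂ : 0 ≤ C₂)
    (h0 : ∀ N i, 0 ≤ c N i) (hlt : ∀ N i, c N i < C₁)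
    (hfin : ∀ N, {i | c N i ≠ 0}.Finite)
    (hcount : ∀ N : ℕ, (Nat.card {i | c N i ≠ 0} : ℝ) ≤ C₂ * N)
    (A : Measure ℝ)
    (hweak : ∀ f : BoundedContinuousFunction ℝ ℝ,
      Tendsto (fun (N : ℕ) => (N : ℝ)⁻¹ * ∑' i, if c N i ≠ 0 then f (c N i) else 0)
        atTop (nhds (∫ x, f x ∂A))) :
    ∃ a : ℕ → ℕ → ℂ, ∃ b : ℕ → ℂ,
      (∀ N k, ‖a N k‖ ≤ (C₂ * C₁) * C₁ ^ k) ∧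
      (∀ k, Tendsto (fun N => a N k) atTop (nhds (b k))) ∧
      (∀ N : ℕ, ∀ w : ℂ, ‖w‖ * C₁ < 1 →
        (N : ℂ)⁻¹ * ∑' i, Complex.log (1 + ((s * c N i : ℝ) : ℂ) * w)
          = ∑' k, a N k * w ^ (k + 1)) := by
  have habs : ∀ N i, |s * c N i| ≤ C₁ := by
    intro N i
    rcases hs with h | h <;>
      simp [h, abs_of_nonneg (h0 N i), abs_of_nonpos (neg_nonpos.mpr (h0 N i)), (hlt N i).le]
  -- the real moments
  set S : ℕ → Finset ℕ := fun N => (hfin N).toFinset with hS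
  set m : ℕ → ℕ → ℝ := fun N k => (N : ℝ)⁻¹ * ∑ i ∈ S N, c N i ^ (k + 1) with hm
  have hm0 : ∀ N k, 0 ≤ m N k := by
    intro N k
    apply mul_nonneg (by positivity)
    exact Finset.sum_nonneg fun i _ => pow_nonneg (h0 N i) _
  have hmle : ∀ N k, m N k ≤ C₂ * C₁ ^ (k + 1) := by
    intro N k
    have hsum : ∑ i ∈ S N, c N i ^ (k + 1) ≤ (S N).card * C₁ ^ (k + 1) := by
      calc ∑ i ∈ S N, c N i ^ (k + 1) ≤ ∑ _i ∈ S N, C₁ ^ (k + 1) :=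
            Finset.sum_le_sum fun i _ => pow_le_pow_left₀ (h0 N i) (hlt N i).le _
        _ = (S N).card * C₁ ^ (k + 1) := by rw [Finset.sum_const, nsmul_eq_mul]
    have hcard : ((S N).card : ℝ) ≤ C₂ * N := by
      have := hcount N
      rwa [Nat.card_eq_card_finite_toFinset (hfin N)] at this
    rcases Nat.eq_zero_or_pos N with h | h
    · subst h
      have hz : m 0 k = 0 := by simp [hm]
      rw [hz]
      positivity
    · have hN : (0 : ℝ) < N := by exact_mod_cast h
      calc m N k ≤ (N : ℝ)⁻¹ * ((S N).card * C₁ ^ (k + 1)) := by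
            apply mul_le_mul_of_nonneg_left hsum (by positivity)
        _ ≤ (N : ℝ)⁻¹ * ((C₂ * N) * C₁ ^ (k + 1)) := by
            apply mul_le_mul_of_nonneg_left _ (by positivity)
            apply mul_le_mul_of_nonneg_right hcard (by positivity)
        _ = C₂ * C₁ ^ (k + 1) := by field_simp
  -- convergence of the moments
  have hmconv : ∀ k, Tendsto (fun N => m N k) atTop
      (nhds (∫ x, testFun C₁ hC₁ k x ∂A)) := by
    intro k
    have hthis := hweak (testFun C₁ hC₁ k)
    have heq : (fun N : ℕ => (N : ℝ)⁻¹ * ∑' i, if c N i ≠ 0 then (testFun C₁ hC₁ k) (c N i) else 0)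
        = fun N => m N k := by
      funext N
      simp only [hm]
      congr 1
      calc (∑' i, if c N i ≠ 0 then (testFun C₁ hC₁ k) (c N i) else 0)
          = ∑ i ∈ S N, (if c N i ≠ 0 then (testFun C₁ hC₁ k) (c N i) else 0) := by
            apply tsum_eq_sum
            intro i hi
            have : c N i = 0 := by
              by_contra hne
              exact hi ((hfin N).mem_toFinset.mpr hne)
            simp [this]
        _ = ∑ i ∈ S N, c N i ^ (k + 1) := by
            apply Finset.sum_congr rfl
            intro i hi
            have hne : c N i ≠ 0 := (hfin N).mem_toFinset.mp hi
            rw [if_pos hne, testFun_eval C₁ hC₁ k (h0 N i) (hlt N i).le]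
    rw [← heq]
    exact hthis
  -- define complex coefficients
  refine ⟨fun N k => (-1 : ℂ) ^ k * (s : ℂ) ^ (k + 1) * (m N k : ℂ) / ((k : ℂ) + 1),
    fun k => (-1 : ℂ) ^ k * (s : ℂ) ^ (k + 1) *
      ((∫ x, testFun C₁ hC₁ k x ∂A : ℝ) : ℂ) / ((k : ℂ) + 1), ?_, ?_, ?_⟩
  · intro N k
    have hsnorm : ‖(s : ℂ)‖ = 1 := by
      rcases hs with h | h <;> simp [h]
    have hknorm : ‖((k : ℂ) + 1)‖ = (k : ℝ) + 1 := by
      have : ((k : ℂ) + 1) = ((k + 1 : ℕ) : ℂ) := by push_cast; ring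
      rw [this, Complex.norm_natCast]
      push_cast; ring
    rw [norm_div, norm_mul, norm_mul, norm_pow, norm_pow, hsnorm, hknorm]
    simp only [norm_neg, norm_one, one_pow, one_mul, Complex.norm_real]
    rw [Real.norm_eq_abs, abs_of_nonneg (hm0 N k)]
    have h1 : m N k / ((k : ℝ) + 1) ≤ m N k := by
      apply div_le_self (hm0 N k)
      have : (0:ℝ) ≤ k := Nat.cast_nonneg k
      linarith
    calc m N k / ((k : ℝ) + 1) ≤ m N k := h1
      _ ≤ C₂ * C₁ ^ (k + 1) := hmle N k
      _ = (C₂ * C₁) * C₁ ^ k := by rw [pow_succ]; ring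
  · intro k
    have h1 : Tendsto (fun N => ((m N k : ℝ) : ℂ)) atTop
        (nhds ((∫ x, testFun C₁ hC₁ k x ∂A : ℝ) : ℂ)) :=
      (Complex.continuous_ofReal.tendsto _).comp (hmconv k)
    exact ((h1.const_mul ((-1 : ℂ) ^ k * (s : ℂ) ^ (k + 1))).div_const _)
  · intro N w hw
    -- the series identity
    have hnorm : ∀ i, ‖((s * c N i : ℝ) : ℂ) * w‖ < 1 := by
      intro i
      rw [norm_mul, Complex.norm_real, Real.norm_eq_abs]
      calc |s * c N i| * ‖w‖ ≤ C₁ * ‖w‖ :=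
            mul_le_mul_of_nonneg_right (habs N i) (norm_nonneg _)
        _ < 1 := by rw [mul_comm]; exact hw
    have hser : ∀ i, HasSum (fun k : ℕ =>
        (-1 : ℂ) ^ k * (((s * c N i : ℝ) : ℂ) * w) ^ (k + 1) / (k + 1))
        (Complex.log (1 + ((s * c N i : ℝ) : ℂ) * w)) := fun i => log_series (hnorm i)
    calc (N : ℂ)⁻¹ * ∑' i, Complex.log (1 + ((s * c N i : ℝ) : ℂ) * w)
        = (N : ℂ)⁻¹ * ∑ i ∈ S N, Complex.log (1 + ((s * c N i : ℝ) : ℂ) * w) := by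
          congr 1
          apply tsum_eq_sum
          intro i hi
          have : c N i = 0 := by
            by_contra hne
            exact hi ((hfin N).mem_toFinset.mpr hne)
          simp [this]
      _ = (N : ℂ)⁻¹ * ∑ i ∈ S N, ∑' k : ℕ,
            (-1 : ℂ) ^ k * (((s * c N i : ℝ) : ℂ) * w) ^ (k + 1) / (k + 1) := by
          congr 1
          exact Finset.sum_congr rfl fun i _ => ((hser i).tsum_eq).symm
      _ = (N : ℂ)⁻¹ * ∑' k : ℕ, ∑ i ∈ S N,
            (-1 : ℂ) ^ k * (((s * c N i : ℝ) : ℂ) * w) ^ (k + 1) / (k + 1) := by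
          congr 1
          exact (Summable.tsum_finsetSum fun i _ => (hser i).summable).symm
      _ = ∑' k : ℕ, (N : ℂ)⁻¹ * ∑ i ∈ S N,
            (-1 : ℂ) ^ k * (((s * c N i : ℝ) : ℂ) * w) ^ (k + 1) / (k + 1) := by
          rw [tsum_mul_left]
      _ = ∑' k : ℕ, ((-1 : ℂ) ^ k * (s : ℂ) ^ (k + 1) * (m N k : ℂ) / ((k : ℂ) + 1))
            * w ^ (k + 1) := by
          apply tsum_congr
          intro k
          have hterm : ∀ i ∈ S N,
              (-1 : ℂ) ^ k * (((s * c N i : ℝ) : ℂ) * w) ^ (k + 1) / (k + 1)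
              = ((-1 : ℂ) ^ k * (s : ℂ) ^ (k + 1) / ((k : ℂ) + 1) * w ^ (k + 1))
                * ((c N i ^ (k + 1) : ℝ) : ℂ) := by
            intro i _
            push_cast
            ring
          rw [Finset.sum_congr rfl hterm, ← Finset.mul_sum]
          simp only [hm]
          push_cast
          ring

end VoicAux

open VoicAux

/-- Under the "sufficient condition" on the sequences of Voiculescu
parameters `ω(N) = (α^±(N), β^±(N), γ^±(N))` — convergence of `γ^±(N)/N`, weak
convergence of the empirical measures of the parameters to finite compactly supported
measures, uniform boundedness, and at most `C₂ N` nonzero parameters — the functions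
`(1/N) L_N(z) = (1/N) log Φ^{ω(N)}(z+1)` converge uniformly on some closed disc
`{|z| ≤ ε}` to a function analytic there. -/
theorem log_voiculescu_converges_uniformly
    (αp αm βp βm : ℕ → ℕ → ℝ) (γp γm : ℕ → ℝ)
    -- ω(N) ∈ Ω : nonincreasing summable sequences of nonnegative reals, etc.
    (hαp0 : ∀ N i, 0 ≤ αp N i) (hαm0 : ∀ N i, 0 ≤ αm N i)
    (hβp0 : ∀ N i, 0 ≤ βp N i) (hβm0 : ∀ N i, 0 ≤ βm N i)
    (hαpd : ∀ N i, αp N (i + 1) ≤ αp N i) (hαmd : ∀ N i, αm N (i + 1) ≤ αm N i)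
    (hβpd : ∀ N i, βp N (i + 1) ≤ βp N i) (hβmd : ∀ N i, βm N (i + 1) ≤ βm N i)
    (hαps : ∀ N, Summable (αp N)) (hαms : ∀ N, Summable (αm N))
    (hβps : ∀ N, Summable (βp N)) (hβms : ∀ N, Summable (βm N))
    (hβ1 : ∀ N, βp N 0 + βm N 0 ≤ 1)
    (hγp0 : ∀ N, 0 ≤ γp N) (hγm0 : ∀ N, 0 ≤ γm N)
    -- (a) convergence of γ^±(N)/N
    (ha : (∃ gp : ℝ, Tendsto (fun N => γp N / N) atTop (nhds gp)) ∧
          (∃ gm : ℝ, Tendsto (fun N => γm N / N) atTop (nhds gm)))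
    -- (b) weak convergence of the empirical measures of the nonzero parameters
    -- to finite compactly supported limit measures
    (hb : ∀ c ∈ [αp, αm, βp, βm], ∃ A : Measure ℝ, IsFiniteMeasure A ∧
      (∃ K : Set ℝ, IsCompact K ∧ A Kᶜ = 0) ∧
      ∀ f : BoundedContinuousFunction ℝ ℝ,
        Tendsto (fun (N : ℕ) => (N : ℝ)⁻¹ * ∑' i, if c N i ≠ 0 then f (c N i) else 0)
          atTop (nhds (∫ x, f x ∂A)))
    -- (c) uniform bound on the parameters
    (hc : ∃ C₁ : ℝ, 0 < C₁ ∧ ∀ c ∈ [αp, αm, βp, βm], ∀ N i, c N i < C₁)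
    -- (d) at most C₂ N nonzero parameters
    (hfin : ∀ c ∈ [αp, αm, βp, βm], ∀ N, {i | c N i ≠ 0}.Finite)
    (hd : ∃ C₂ : ℝ, 0 < C₂ ∧ ∀ N,
      (Nat.card {i | αp N i ≠ 0} + Nat.card {i | αm N i ≠ 0} +
        Nat.card {i | βp N i ≠ 0} + Nat.card {i | βm N i ≠ 0} : ℝ) ≤ C₂ * N) :
    ∃ ε : ℝ, 0 < ε ∧ ∃ P : ℂ → ℂ,
      AnalyticOnNhd ℂ P (Metric.closedBall 0 ε) ∧
      TendstoUniformlyOn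
        (fun (N : ℕ) (z : ℂ) => (N : ℂ)⁻¹ *
          ((γp N : ℂ) * z + (γm N : ℂ) * (1 / (z + 1) - 1)
            + ∑' i, Complex.log (1 + (βp N i : ℂ) * z)
            - ∑' i, Complex.log (1 - (αp N i : ℂ) * z)
            + ∑' i, Complex.log (1 - (βm N i : ℂ) * z / (1 + z))
            - ∑' i, Complex.log (1 + (αm N i : ℂ) * z / (1 + z))))
        P atTop (Metric.closedBall 0 ε) := by
  obtain ⟨C₁, hC₁pos, hcb⟩ := hc
  obtain ⟨C₂, hC₂pos, hdc⟩ := hd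
  obtain ⟨⟨gp, hgp⟩, ⟨gm, hgm⟩⟩ := ha
  set ε : ℝ := (8 * (C₁ + 1))⁻¹ with hεdef
  have hden : (0:ℝ) < 8 * (C₁ + 1) := by positivity
  have hεpos : 0 < ε := by rw [hεdef]; positivity
  have hεone : ε * (8 * (C₁ + 1)) = 1 := inv_mul_cancel₀ (ne_of_gt hden)
  have hε2 : ε ≤ 1/2 := by nlinarith
  have hq2 : C₁ * (2 * ε) < 1 := by nlinarith
  have hq4 : C₁ * (4 * ε) < 1 := by nlinarith
  -- basic facts about the disc
  have h1z : ∀ z : ℂ, z ∈ Metric.closedBall (0:ℂ) ε → (1/2 : ℝ) ≤ ‖1 + z‖ := by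
    intro z hz
    rw [mem_closedBall_zero_iff] at hz
    have h1 : ‖(1:ℂ)‖ ≤ ‖1 + z‖ + ‖z‖ := by
      calc ‖(1:ℂ)‖ = ‖(1 + z) - z‖ := by ring_nf
        _ ≤ ‖1 + z‖ + ‖z‖ := norm_sub_le _ _
    rw [norm_one] at h1
    linarith
  have hne : ∀ z : ℂ, z ∈ Metric.closedBall (0:ℂ) ε → 1 + z ≠ 0 := by
    intro z hz h
    have := h1z z hz
    rw [h, norm_zero] at this
    linarith
  have hmapz : ∀ z : ℂ, z ∈ Metric.closedBall (0:ℂ) ε → ‖z / (1 + z)‖ ≤ 2 * ε := by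
    intro z hz
    have h1 := h1z z hz
    have h2 : ‖z‖ ≤ ε := mem_closedBall_zero_iff.mp hz
    rw [norm_div]
    rw [div_le_iff₀ (by linarith)]
    nlinarith
  -- per-family data
  obtain ⟨A1, _, _, hw1⟩ := hb βp (by simp)
  obtain ⟨A2, _, _, hw2⟩ := hb αp (by simp)
  obtain ⟨A3, _, _, hw3⟩ := hb βm (by simp)
  obtain ⟨A4, _, _, hw4⟩ := hb αm (by simp)
  have hnn : ∀ c : ℕ → ℕ → ℝ, ∀ N : ℕ, (0:ℝ) ≤ (Nat.card {i | c N i ≠ 0} : ℝ) :=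
    fun c N => Nat.cast_nonneg _
  have hcount1 : ∀ N : ℕ, (Nat.card {i | βp N i ≠ 0} : ℝ) ≤ C₂ * N := by
    intro N; have := hdc N
    have h1 := hnn αp N; have h2 := hnn αm N; have h3 := hnn βm N
    linarith
  have hcount2 : ∀ N : ℕ, (Nat.card {i | αp N i ≠ 0} : ℝ) ≤ C₂ * N := by
    intro N; have := hdc N
    have h1 := hnn βp N; have h2 := hnn αm N; have h3 := hnn βm N
    linarith
  have hcount3 : ∀ N : ℕ, (Nat.card {i | βm N i ≠ 0} : ℝ) ≤ C₂ * N := by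
    intro N; have := hdc N
    have h1 := hnn αp N; have h2 := hnn αm N; have h3 := hnn βp N
    linarith
  have hcount4 : ∀ N : ℕ, (Nat.card {i | αm N i ≠ 0} : ℝ) ≤ C₂ * N := by
    intro N; have := hdc N
    have h1 := hnn αp N; have h2 := hnn βp N; have h3 := hnn βm N
    linarith
  obtain ⟨a1, b1, hbnd1, hconv1, hid1⟩ := family βp 1 (Or.inl rfl) C₁ C₂ hC₁pos hC₂pos.le
    hβp0 (hcb βp (by simp)) (hfin βp (by simp)) hcount1 A1 hw1
  obtain ⟨a2, b2, hbnd2, hconv2, hid2⟩ := family αp (-1) (Or.inr rfl) C₁ C₂ hC₁pos hC₂pos.le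
    hαp0 (hcb αp (by simp)) (hfin αp (by simp)) hcount2 A2 hw2
  obtain ⟨a3, b3, hbnd3, hconv3, hid3⟩ := family βm (-1) (Or.inr rfl) C₁ C₂ hC₁pos hC₂pos.le
    hβm0 (hcb βm (by simp)) (hfin βm (by simp)) hcount3 A3 hw3
  obtain ⟨a4, b4, hbnd4, hconv4, hid4⟩ := family αm 1 (Or.inl rfl) C₁ C₂ hC₁pos hC₂pos.le
    hαm0 (hcb αm (by simp)) (hfin αm (by simp)) hcount4 A4 hw4
  have hM : (0:ℝ) ≤ C₂ * C₁ := by positivity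
  -- uniform convergence of the four series on the disc of radius 2ε
  have U1 := UL a1 b1 (C₂ * C₁) C₁ (2 * ε) hM hC₁pos.le (by linarith) hq2 hbnd1 hconv1
  have U2 := UL a2 b2 (C₂ * C₁) C₁ (2 * ε) hM hC₁pos.le (by linarith) hq2 hbnd2 hconv2
  have U3 := UL a3 b3 (C₂ * C₁) C₁ (2 * ε) hM hC₁pos.le (by linarith) hq2 hbnd3 hconv3
  have U4 := UL a4 b4 (C₂ * C₁) C₁ (2 * ε) hM hC₁pos.le (by linarith) hq2 hbnd4 hconv4
  have hsub12 : Metric.closedBall (0:ℂ) ε ⊆ Metric.closedBall (0:ℂ) (2 * ε) :=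
    Metric.closedBall_subset_closedBall (by linarith)
  have hsub34 : Metric.closedBall (0:ℂ) ε ⊆
      (fun z : ℂ => z / (1 + z)) ⁻¹' Metric.closedBall (0:ℂ) (2 * ε) := by
    intro z hz
    rw [Set.mem_preimage, mem_closedBall_zero_iff]
    exact hmapz z hz
  have V1 := U1.mono hsub12
  have V2 := U2.mono hsub12
  have V3 := (U3.comp (fun z : ℂ => z / (1 + z))).mono hsub34
  have V4 := (U4.comp (fun z : ℂ => z / (1 + z))).mono hsub34
  -- uniform convergence of the γ-parts
  have V5 := gammaUL (fun N => γp N / N) gp hgp (fun z => z) ε hεpos.le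
    (Metric.closedBall (0:ℂ) ε) (fun z hz => mem_closedBall_zero_iff.mp hz)
  have V6 := gammaUL (fun N => γm N / N) gm hgm (fun z => 1 / (z + 1) - 1) (2 * ε)
    (by linarith) (Metric.closedBall (0:ℂ) ε)
    (fun z hz => by
      show ‖(1:ℂ) / (z + 1) - 1‖ ≤ 2 * ε
      have h1 : (1:ℂ) / (z + 1) - 1 = -(z / (1 + z)) := by
        have h2 := hne z hz
        have h3 : z + 1 ≠ 0 := by rwa [add_comm] at h2
        field_simp
        ring
      rw [h1, norm_neg]
      exact hmapz z hz)
  have W := ((((V5.add V6).add V1).sub V2).add V3).sub V4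
  refine ⟨ε, hεpos, _, ?_, W.congr (Eventually.of_forall fun N => ?_)⟩
  · -- analyticity of the limit
    have hbb : ∀ (bb : ℕ → ℂ) (aa : ℕ → ℕ → ℂ), (∀ N k, ‖aa N k‖ ≤ (C₂ * C₁) * C₁ ^ k) →
        (∀ k, Tendsto (fun N => aa N k) atTop (nhds (bb k))) →
        ∀ k, ‖bb k‖ ≤ (C₂ * C₁) * C₁ ^ k := fun bb aa h1 h2 k =>
      le_of_tendsto (h2 k).norm (Eventually.of_forall fun N => h1 N k)
    have hD1 := DL b1 (C₂ * C₁) C₁ (4 * ε) hM hC₁pos.le (by linarith) hq4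
      (hbb b1 a1 hbnd1 hconv1)
    have hD2 := DL b2 (C₂ * C₁) C₁ (4 * ε) hM hC₁pos.le (by linarith) hq4
      (hbb b2 a2 hbnd2 hconv2)
    have hD3 := DL b3 (C₂ * C₁) C₁ (4 * ε) hM hC₁pos.le (by linarith) hq4
      (hbb b3 a3 hbnd3 hconv3)
    have hD4 := DL b4 (C₂ * C₁) C₁ (4 * ε) hM hC₁pos.le (by linarith) hq4
      (hbb b4 a4 hbnd4 hconv4)
    have hball : Metric.closedBall (0:ℂ) ε ⊆ Metric.ball (0:ℂ) (4 * ε) :=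
      Metric.closedBall_subset_ball (by linarith)
    have hball2 : Metric.closedBall (0:ℂ) (2 * ε) ⊆ Metric.ball (0:ℂ) (4 * ε) :=
      Metric.closedBall_subset_ball (by linarith)
    have hmapA : AnalyticOnNhd ℂ (fun z : ℂ => z / (1 + z)) (Metric.closedBall (0:ℂ) ε) := by
      apply AnalyticOnNhd.div analyticOnNhd_id
      · exact fun z hz => (analyticAt_const.add analyticAt_id)
      · exact fun z hz => hne z hz
    have hmapsTo : Set.MapsTo (fun z : ℂ => z / (1 + z)) (Metric.closedBall (0:ℂ) ε)
        (Metric.closedBall (0:ℂ) (2 * ε)) := by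
      intro z hz
      show z / (1 + z) ∈ Metric.closedBall (0:ℂ) (2 * ε)
      exact mem_closedBall_zero_iff.mpr (hmapz z hz)
    have hA5 : AnalyticOnNhd ℂ (fun z : ℂ => (gp:ℂ) * z) (Metric.closedBall (0:ℂ) ε) :=
      analyticOnNhd_const.mul analyticOnNhd_id
    have hA6 : AnalyticOnNhd ℂ (fun z : ℂ => (gm:ℂ) * (1 / (z + 1) - 1))
        (Metric.closedBall (0:ℂ) ε) := by
      apply AnalyticOnNhd.mul analyticOnNhd_const
      intro z hz
      apply AnalyticAt.sub _ analyticAt_const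
      apply AnalyticAt.div analyticAt_const (analyticAt_id.add analyticAt_const)
      have h2 := hne z hz
      rwa [add_comm] at h2
    exact ((((hA5.add hA6).add (hD1.mono hball)).sub (hD2.mono hball)).add
      ((hD3.mono hball2).comp hmapA hmapsTo)).sub ((hD4.mono hball2).comp hmapA hmapsTo)
  · -- the identification of the functions
    intro z hz
    have hwz : ‖z‖ * C₁ < 1 := by
      have h2 : ‖z‖ ≤ ε := mem_closedBall_zero_iff.mp hz
      nlinarith [norm_nonneg z]
    have hww : ‖z / (1 + z)‖ * C₁ < 1 := by
      have h2 := hmapz z hz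
      nlinarith [norm_nonneg (z / (1 + z))]
    have e1 : (N : ℂ)⁻¹ * ∑' i, Complex.log (1 + (βp N i : ℂ) * z)
        = ∑' k, a1 N k * z ^ (k + 1) := by
      rw [← hid1 N z hwz]
      congr 1
      apply tsum_congr
      intro i
      congr 2
      push_cast
      ring
    have e2 : (N : ℂ)⁻¹ * ∑' i, Complex.log (1 - (αp N i : ℂ) * z)
        = ∑' k, a2 N k * z ^ (k + 1) := by
      rw [← hid2 N z hwz]
      congr 1
      apply tsum_congr
      intro i
      congr 2
      push_cast
      ring
    have e3 : (N : ℂ)⁻¹ * ∑' i, Complex.log (1 - (βm N i : ℂ) * z / (1 + z))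
        = ∑' k, a3 N k * (z / (1 + z)) ^ (k + 1) := by
      rw [← hid3 N (z / (1 + z)) hww]
      congr 1
      apply tsum_congr
      intro i
      congr 2
      push_cast
      ring
    have e4 : (N : ℂ)⁻¹ * ∑' i, Complex.log (1 + (αm N i : ℂ) * z / (1 + z))
        = ∑' k, a4 N k * (z / (1 + z)) ^ (k + 1) := by
      rw [← hid4 N (z / (1 + z)) hww]
      congr 1
      apply tsum_congr
      intro i
      congr 2
      push_cast
      ring
    simp only [Pi.add_apply, Pi.sub_apply, Function.comp_apply]
    rw [← e1, ← e2, ← e3, ← e4]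
    push_cast
    ring
end

section
/- Let (t_k)_{k≥1} be real numbers and C > 0 a constant with |t_k| ≤ C^k for all k ≥ 1. In the ring ℝ[[z]] of formal power series, set Q(z) := 1 + z(1+z)(t_1 + t_2 z + t_3 z^2 + ⋯), let v_0(z) := (z/Q(z))^{(−1)} be the compositional inverse of z/Q(z), and let m_k denote the coefficient of z^{k+1} in log(1 + v_0(z)). Then there exists a constant C_1 > 0 such that |m_k| < C_1^k for all k ≥ 1. -/
open PowerSeries

/-- Composition `f(g)` of formal power series; this gives the usual composition
whenever `g` has zero constant term (then `coeff n (g^m) = 0` for `m > n`). -/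
noncomputable def psComp (f g : PowerSeries ℝ) : PowerSeries ℝ :=
  PowerSeries.mk fun n =>
    ∑ m ∈ Finset.range (n + 1), (PowerSeries.coeff m f) * (PowerSeries.coeff n (g ^ m))

/-- The series `log(1+v) = v - v²/2 + v³/3 - ⋯`, i.e. the composition of
`L(z) = ∑_{n≥1} (-1)^{n+1} z^n / n` with `v`. -/
noncomputable def psLogOneAdd (v : PowerSeries ℝ) : PowerSeries ℝ :=
  psComp (PowerSeries.mk fun n => if n = 0 then 0 else (-1) ^ (n + 1) / n) v

open Finset in
lemma mgb_coeff_psComp (f g : PowerSeries ℝ) (n : ℕ) :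
    coeff n (psComp f g) = ∑ m ∈ range (n + 1), coeff m f * coeff n (g ^ m) := by
  simp [psComp]

lemma mgb_coeff_pow_of_lt {g : PowerSeries ℝ} (hg : constantCoeff g = 0)
    {m n : ℕ} (h : n < m) : coeff n (g ^ m) = 0 := by
  obtain ⟨c, rfl⟩ := (PowerSeries.X_dvd_iff).mpr hg
  rw [mul_pow, PowerSeries.coeff_X_pow_mul']
  rw [if_neg (by omega)]

lemma mgb_constantCoeff_pow {g : PowerSeries ℝ} (hg : constantCoeff g = 0)
    {m : ℕ} (hm : 1 ≤ m) : constantCoeff (g ^ m) = 0 := by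
  rw [map_pow, hg, zero_pow (by omega)]

lemma mgb_constantCoeff_psComp (f g : PowerSeries ℝ) :
    constantCoeff (psComp f g) = constantCoeff f := by
  have := mgb_coeff_psComp f g 0
  simpa [PowerSeries.coeff_zero_eq_constantCoeff] using this

open Finset in
lemma mgb_psComp_one (g : PowerSeries ℝ) : psComp 1 g = 1 := by
  ext n
  rw [mgb_coeff_psComp]
  rw [Finset.sum_eq_single 0]
  · simp
  · intro m _ hm
    rw [PowerSeries.coeff_one, if_neg hm, zero_mul]
  · simp

open Finset in
lemma mgb_psComp_X_left {g : PowerSeries ℝ} (hg : constantCoeff g = 0) :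
    psComp X g = g := by
  ext n
  rw [mgb_coeff_psComp]
  rcases Nat.eq_zero_or_pos n with rfl | hn
  · simp [hg]
  · rw [Finset.sum_eq_single 1]
    · simp
    · intro m _ hm
      rw [PowerSeries.coeff_X, if_neg hm, zero_mul]
    · intro h
      exact absurd (Finset.mem_range.mpr (by omega)) h

open Finset in
lemma mgb_psComp_X_right (f : PowerSeries ℝ) : psComp f X = f := by
  ext n
  rw [mgb_coeff_psComp]
  rw [Finset.sum_eq_single n]
  · rw [PowerSeries.coeff_X_pow, if_pos rfl, mul_one]
  · intro m _ hm
    rw [PowerSeries.coeff_X_pow, if_neg (fun h => hm h.symm), mul_zero]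
  · intro h
    exact absurd (Finset.mem_range.mpr (by omega)) h

open Finset in
lemma mgb_psComp_mul {g : PowerSeries ℝ} (hg : constantCoeff g = 0) (f₁ f₂ : PowerSeries ℝ) :
    psComp (f₁ * f₂) g = psComp f₁ g * psComp f₂ g := by
  ext n
  rw [PowerSeries.coeff_mul, mgb_coeff_psComp]
  have hsub : (range (n+1)).biUnion (fun m => antidiagonal m) ⊆ range (n+1) ×ˢ range (n+1) := by
    intro p hp
    simp only [mem_biUnion, mem_range, Finset.HasAntidiagonal.mem_antidiagonal] at hp
    obtain ⟨m, hm, hpm⟩ := hp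
    simp only [mem_product, mem_range]
    omega
  have hdisj : (↑(range (n+1)) : Set ℕ).PairwiseDisjoint (fun m => antidiagonal m) := by
    intro m₁ _ m₂ _ hne
    simp only [Function.onFun]
    rw [Finset.disjoint_left]
    intro p hp1 hp2
    rw [Finset.HasAntidiagonal.mem_antidiagonal] at hp1 hp2
    omega
  have L : ∑ m ∈ range (n+1), coeff m (f₁*f₂) * coeff n (g^m)
      = ∑ p ∈ range (n+1) ×ˢ range (n+1),
          coeff p.1 f₁ * coeff p.2 f₂ * coeff n (g ^ (p.1 + p.2)) := by
    have e1 : ∀ m ∈ range (n+1), coeff m (f₁*f₂) * coeff n (g^m)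
        = ∑ p ∈ antidiagonal m, coeff p.1 f₁ * coeff p.2 f₂ * coeff n (g ^ (p.1+p.2)) := by
      intro m _
      rw [PowerSeries.coeff_mul, Finset.sum_mul]
      exact Finset.sum_congr rfl fun p hp => by rw [Finset.HasAntidiagonal.mem_antidiagonal.mp hp]
    rw [Finset.sum_congr rfl e1, ← Finset.sum_biUnion hdisj]
    refine Finset.sum_subset hsub ?_
    intro p hp hnp
    have h1 : n < p.1 + p.2 := by
      by_contra hle
      exact hnp (by simp only [mem_biUnion, mem_range, Finset.HasAntidiagonal.mem_antidiagonal]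
                    exact ⟨p.1 + p.2, by omega, rfl⟩)
    rw [mgb_coeff_pow_of_lt hg h1, mul_zero]
  rw [L]
  have e1 : ∀ p ∈ antidiagonal n,
      coeff p.1 (psComp f₁ g) * coeff p.2 (psComp f₂ g)
      = ∑ q ∈ range (n+1) ×ˢ range (n+1),
          (coeff q.1 f₁ * coeff p.1 (g ^ q.1)) * (coeff q.2 f₂ * coeff p.2 (g ^ q.2)) := by
    intro p hp
    have hp' := Finset.HasAntidiagonal.mem_antidiagonal.mp hp
    have h1 : coeff p.1 (psComp f₁ g)
        = ∑ a ∈ range (n+1), coeff a f₁ * coeff p.1 (g ^ a) := by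
      rw [mgb_coeff_psComp]
      refine Finset.sum_subset (Finset.range_subset_range.mpr (by omega)) ?_
      intro a _ ha
      rw [mgb_coeff_pow_of_lt hg (by simp only [mem_range] at ha ⊢; omega), mul_zero]
    have h2 : coeff p.2 (psComp f₂ g)
        = ∑ b ∈ range (n+1), coeff b f₂ * coeff p.2 (g ^ b) := by
      rw [mgb_coeff_psComp]
      refine Finset.sum_subset (Finset.range_subset_range.mpr (by omega)) ?_
      intro b _ hb
      rw [mgb_coeff_pow_of_lt hg (by simp only [mem_range] at hb ⊢; omega), mul_zero]
    rw [h1, h2, Finset.sum_mul_sum, ← Finset.sum_product']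
  rw [Finset.sum_congr rfl e1, Finset.sum_comm]
  refine Finset.sum_congr rfl fun q hq => ?_
  rw [pow_add, PowerSeries.coeff_mul, Finset.mul_sum]
  exact Finset.sum_congr rfl fun p _ => by ring

lemma mgb_psComp_pow {g : PowerSeries ℝ} (hg : constantCoeff g = 0)
    (f : PowerSeries ℝ) (m : ℕ) : psComp (f ^ m) g = (psComp f g) ^ m := by
  induction m with
  | zero => simpa using mgb_psComp_one g
  | succ m ih => rw [pow_succ, pow_succ, mgb_psComp_mul hg, ih]

open Finset in
lemma mgb_psComp_assoc {g h : PowerSeries ℝ}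
    (hg : constantCoeff g = 0) (hh : constantCoeff h = 0) (f : PowerSeries ℝ) :
    psComp (psComp f g) h = psComp f (psComp g h) := by
  ext n
  rw [mgb_coeff_psComp, mgb_coeff_psComp]
  have e2 : ∀ m ∈ range (n+1), coeff m f * coeff n ((psComp g h) ^ m)
      = ∑ j ∈ range (n+1), coeff m f * (coeff j (g ^ m) * coeff n (h ^ j)) := by
    intro m _
    rw [← mgb_psComp_pow hh, mgb_coeff_psComp, Finset.mul_sum]
  rw [Finset.sum_congr rfl e2, Finset.sum_comm]
  refine Finset.sum_congr rfl fun j hj => ?_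
  rw [mgb_coeff_psComp, Finset.sum_mul]
  have hjn : j + 1 ≤ n + 1 := by simp only [mem_range] at hj; omega
  refine (Finset.sum_subset (Finset.range_subset_range.mpr hjn) ?_).trans
    (Finset.sum_congr rfl fun m _ => by ring)
  intro m _ hm
  rw [mgb_coeff_pow_of_lt hg (by simp only [mem_range] at hm ⊢; omega)]
  ring

open Finset in
lemma mgb_pow_coeff_congr {a b : PowerSeries ℝ} {d : ℕ}
    (hab : ∀ i, i ≤ d → coeff i a = coeff i b) (m : ℕ) :
    ∀ i, i ≤ d → coeff i (a ^ m) = coeff i (b ^ m) := by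
  induction m with
  | zero => simp
  | succ m ih =>
    intro i hi
    rw [pow_succ, pow_succ, PowerSeries.coeff_mul, PowerSeries.coeff_mul]
    refine Finset.sum_congr rfl fun p hp => ?_
    have hp' := Finset.HasAntidiagonal.mem_antidiagonal.mp hp
    rw [ih p.1 (by omega), hab p.2 (by omega)]

open Finset in
lemma mgb_pow_coeff_succ_congr {a b : PowerSeries ℝ} {d : ℕ}
    (ha : constantCoeff a = 0) (hb : constantCoeff b = 0)
    (hab : ∀ i, i ≤ d → coeff i a = coeff i b) {m : ℕ} (hm : 2 ≤ m) :
    coeff (d + 1) (a ^ m) = coeff (d + 1) (b ^ m) := by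
  obtain ⟨k, rfl⟩ : ∃ k, m = k + 1 := ⟨m - 1, by omega⟩
  rw [pow_succ', pow_succ', PowerSeries.coeff_mul, PowerSeries.coeff_mul]
  refine Finset.sum_congr rfl fun p hp => ?_
  have hp' := Finset.HasAntidiagonal.mem_antidiagonal.mp hp
  rcases Nat.eq_zero_or_pos p.1 with h1 | h1
  · rw [h1]
    simp only [PowerSeries.coeff_zero_eq_constantCoeff, ha, hb, zero_mul]
  · rcases Nat.eq_zero_or_pos p.2 with h2 | h2
    · rw [h2]
      simp only [PowerSeries.coeff_zero_eq_constantCoeff]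
      rw [mgb_constantCoeff_pow ha (show 1 ≤ k by omega),
        mgb_constantCoeff_pow hb (show 1 ≤ k by omega), mul_zero, mul_zero]
    · rw [hab p.1 (by omega), mgb_pow_coeff_congr hab k p.2 (by omega)]

open Finset in
lemma mgb_psComp_cancel {v u u' : PowerSeries ℝ}
    (hv1 : coeff 1 v = 1) (hu : constantCoeff u = 0) (hu' : constantCoeff u' = 0)
    (h : psComp v u = psComp v u') : u = u' := by
  ext n
  induction n using Nat.strong_induction_on with
  | _ n ih =>
  match n with
  | 0 => rw [PowerSeries.coeff_zero_eq_constantCoeff, hu, hu']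
  | (d+1) =>
    have hagree : ∀ i, i ≤ d → coeff i u = coeff i u' := by
      intro i hi
      rcases Nat.eq_zero_or_pos i with rfl | hi'
      · rw [PowerSeries.coeff_zero_eq_constantCoeff, hu, hu']
      · exact ih i (by omega)
    have hc := congrArg (coeff (d+1)) h
    rw [mgb_coeff_psComp, mgb_coeff_psComp] at hc
    have h1mem : (1 : ℕ) ∈ range (d+2) := by simp
    rw [← Finset.add_sum_erase _ _ h1mem, ← Finset.add_sum_erase _ _ h1mem] at hc
    have heq : ∑ m ∈ (range (d+2)).erase 1, coeff m v * coeff (d+1) (u ^ m)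
        = ∑ m ∈ (range (d+2)).erase 1, coeff m v * coeff (d+1) (u' ^ m) := by
      refine Finset.sum_congr rfl fun m hm => ?_
      simp only [Finset.mem_erase, mem_range] at hm
      rcases Nat.eq_zero_or_pos m with rfl | hm'
      · simp
      · rw [mgb_pow_coeff_succ_congr hu hu' hagree (by omega)]
    rw [heq] at hc
    have := add_right_cancel hc
    rwa [pow_one, pow_one, hv1, one_mul, one_mul] at this

open Finset in
lemma mgb_basel_aux : ∀ N : ℕ, 1 ≤ N →
    ∑ i ∈ range (N+1), (((i:ℝ))^2)⁻¹ ≤ 2 - ((N:ℝ))⁻¹ := by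
  intro N hN
  induction N with
  | zero => omega
  | succ N ih =>
    rcases Nat.eq_zero_or_pos N with rfl | hN'
    · norm_num
    · rw [Finset.sum_range_succ]
      have h1 := ih hN'
      have hx : (1:ℝ) ≤ (N:ℝ) := by exact_mod_cast hN'
      have key : ((N:ℝ)+1)⁻¹ + (((N:ℝ)+1)^2)⁻¹ ≤ (N:ℝ)⁻¹ := by
        rw [← sub_nonneg]
        have e : (N:ℝ)⁻¹ - (((N:ℝ)+1)⁻¹ + (((N:ℝ)+1)^2)⁻¹)
            = 1 / ((N:ℝ) * ((N:ℝ)+1)^2) := by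
          field_simp
          ring
        rw [e]
        positivity
      push_cast
      linarith

open Finset in
lemma mgb_basel (N : ℕ) : ∑ i ∈ range (N+1), (((i:ℝ))^2)⁻¹ ≤ 2 := by
  rcases Nat.eq_zero_or_pos N with rfl | hN
  · norm_num
  · have h := mgb_basel_aux N hN
    have : (0:ℝ) < (N:ℝ)⁻¹ := by positivity
    linarith

open Finset in
lemma mgb_pair (N : ℕ) (hN : 1 ≤ N) :
    ∑ p ∈ antidiagonal N, (((p.1:ℝ))^2)⁻¹ * (((p.2:ℝ))^2)⁻¹ ≤ 8 * (((N:ℝ))^2)⁻¹ := by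
  have hNr : (0:ℝ) < (N:ℝ) := by exact_mod_cast hN
  have hterm : ∀ p ∈ antidiagonal N, (((p.1:ℝ))^2)⁻¹ * (((p.2:ℝ))^2)⁻¹
      ≤ 2 * (((N:ℝ))^2)⁻¹ * ((((p.1:ℝ))^2)⁻¹ + (((p.2:ℝ))^2)⁻¹) := by
    intro p hp
    have hp' := Finset.HasAntidiagonal.mem_antidiagonal.mp hp
    rcases Nat.eq_zero_or_pos p.1 with h1 | h1
    · rw [h1]
      simp only [Nat.cast_zero]
      norm_num
      positivity
    rcases Nat.eq_zero_or_pos p.2 with h2 | h2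
    · rw [h2]
      simp only [Nat.cast_zero]
      norm_num
      positivity
    · have ha : (0:ℝ) < (p.1:ℝ) := by exact_mod_cast h1
      have hb : (0:ℝ) < (p.2:ℝ) := by exact_mod_cast h2
      have hab : (p.1:ℝ) + (p.2:ℝ) = (N:ℝ) := by exact_mod_cast hp'
      rw [← hab, ← sub_nonneg]
      have e : 2 * ((((p.1:ℝ))+(p.2:ℝ))^2)⁻¹ * ((((p.1:ℝ))^2)⁻¹ + (((p.2:ℝ))^2)⁻¹)
          - (((p.1:ℝ))^2)⁻¹ * (((p.2:ℝ))^2)⁻¹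
          = ((p.1:ℝ) - (p.2:ℝ))^2 / ((p.1:ℝ)^2 * (p.2:ℝ)^2 * ((p.1:ℝ)+(p.2:ℝ))^2) := by
        have hs : (0:ℝ) < (p.1:ℝ) + (p.2:ℝ) := by linarith
        field_simp
        ring
      rw [e]
      positivity
  calc ∑ p ∈ antidiagonal N, (((p.1:ℝ))^2)⁻¹ * (((p.2:ℝ))^2)⁻¹
      ≤ ∑ p ∈ antidiagonal N,
          2 * (((N:ℝ))^2)⁻¹ * ((((p.1:ℝ))^2)⁻¹ + (((p.2:ℝ))^2)⁻¹) :=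
        Finset.sum_le_sum hterm
    _ = 2 * (((N:ℝ))^2)⁻¹ * ((∑ p ∈ antidiagonal N, (((p.1:ℝ))^2)⁻¹)
          + ∑ p ∈ antidiagonal N, (((p.2:ℝ))^2)⁻¹) := by
        rw [← Finset.sum_add_distrib, Finset.mul_sum]
    _ ≤ 2 * (((N:ℝ))^2)⁻¹ * (2 + 2) := by
        have hS1 : ∑ p ∈ antidiagonal N, (((p.1:ℝ))^2)⁻¹ ≤ 2 := by
          rw [Finset.Nat.sum_antidiagonal_eq_sum_range_succ_mk]
          exact mgb_basel N
        have hS2 : ∑ p ∈ antidiagonal N, (((p.2:ℝ))^2)⁻¹ ≤ 2 := by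
          rw [← Finset.Nat.sum_antidiagonal_swap]
          simpa using hS1
        have : (0:ℝ) ≤ 2 * (((N:ℝ))^2)⁻¹ := by positivity
        nlinarith
    _ = 8 * (((N:ℝ))^2)⁻¹ := by ring

open Finset in
lemma mgb_pow_bound {w : PowerSeries ℝ} {K M : ℝ} (hK : 0 ≤ K) (hM : 0 ≤ M)
    (h0 : constantCoeff w = 0)
    (h : ∀ j, |coeff j w| ≤ K * M^j * (((j:ℝ))^2)⁻¹) :
    ∀ m N, |coeff N (w^(m+1))| ≤ K^(m+1) * 8^m * M^N * (((N:ℝ))^2)⁻¹ := by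
  intro m
  induction m with
  | zero => intro N; simpa using h N
  | succ m ih =>
    intro N
    rcases Nat.eq_zero_or_pos N with rfl | hN
    · have hz : coeff 0 (w^(m+2)) = 0 := by
        rw [PowerSeries.coeff_zero_eq_constantCoeff]
        exact mgb_constantCoeff_pow h0 (by omega)
      rw [hz, abs_zero]
      norm_num
    · rw [pow_succ', PowerSeries.coeff_mul]
      calc |∑ p ∈ antidiagonal N, coeff p.1 w * coeff p.2 (w^(m+1))|
          ≤ ∑ p ∈ antidiagonal N, |coeff p.1 w * coeff p.2 (w^(m+1))| :=
            Finset.abs_sum_le_sum_abs _ _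
        _ ≤ ∑ p ∈ antidiagonal N, (K * M^p.1 * (((p.1:ℝ))^2)⁻¹)
              * (K^(m+1) * 8^m * M^p.2 * (((p.2:ℝ))^2)⁻¹) := by
            refine Finset.sum_le_sum fun p _ => ?_
            rw [abs_mul]
            exact mul_le_mul (h p.1) (ih p.2) (abs_nonneg _) (by positivity)
        _ = (K^(m+2) * 8^m * M^N) * ∑ p ∈ antidiagonal N,
              (((p.1:ℝ))^2)⁻¹ * (((p.2:ℝ))^2)⁻¹ := by
            rw [Finset.mul_sum]
            refine Finset.sum_congr rfl fun p hp => ?_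
            have hp' := Finset.HasAntidiagonal.mem_antidiagonal.mp hp
            rw [← hp', pow_add]
            ring
        _ ≤ (K^(m+2) * 8^m * M^N) * (8 * (((N:ℝ))^2)⁻¹) :=
            mul_le_mul_of_nonneg_left (mgb_pair N hN) (by positivity)
        _ = K^(m+2) * 8^(m+1) * M^N * (((N:ℝ))^2)⁻¹ := by ring


set_option maxHeartbeats 2000000 in
open Finset in
/-- Let `(t_k)` satisfy `|t_k| ≤ C^k`, set
`Q(z) = 1 + z(1+z)(t₁ + t₂ z + ⋯)`, let `v₀ = (z/Q(z))^{(-1)}` be the compositional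
inverse (the unique series `z + ⋯` with `v₀(z/Q(z)) = z`), and let `m_k` be the
coefficient of `z^{k+1}` in `log(1 + v₀(z))`.  Then there is `C₁ > 0` with
`|m_k| < C₁^k` for all `k ≥ 1`. -/
theorem moments_geometric_bound
    (t : ℕ → ℝ) (C : ℝ) (hC : 0 < C) (ht : ∀ k, 1 ≤ k → |t k| ≤ C ^ k)
    (v₀ : PowerSeries ℝ)
    (hv0 : PowerSeries.constantCoeff v₀ = 0) (hv1 : PowerSeries.coeff 1 v₀ = 1)
    (hinv : psComp v₀
        (PowerSeries.X *
          (1 + PowerSeries.X * (1 + PowerSeries.X) * PowerSeries.mk fun n => t (n + 1))⁻¹)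
      = PowerSeries.X) :
    ∃ C₁ : ℝ, 0 < C₁ ∧ ∀ k, 1 ≤ k →
      |PowerSeries.coeff (k + 1) (psLogOneAdd v₀)| < C₁ ^ k := by
  set Qs : PowerSeries ℝ :=
    1 + PowerSeries.X * (1 + PowerSeries.X) * PowerSeries.mk fun n => t (n + 1) with hQs
  set C' : ℝ := max C 1 with hC'
  set M : ℝ := 16 * C' with hMdef
  set K : ℝ := M⁻¹ with hKdef
  have hC'1 : (1:ℝ) ≤ C' := le_max_right _ _
  have hC'0 : (0:ℝ) < C' := lt_of_lt_of_le one_pos hC'1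
  have hCC' : C ≤ C' := le_max_left _ _
  have hM0 : (0:ℝ) < M := by rw [hMdef]; positivity
  have hK0 : (0:ℝ) < K := by rw [hKdef]; positivity
  have hKM : K * M = 1 := inv_mul_cancel₀ hM0.ne'
  -- constant coefficient of Q
  have hQ0 : constantCoeff Qs = 1 := by
    rw [hQs]
    simp
  have hQne : constantCoeff Qs ≠ 0 := by rw [hQ0]; exact one_ne_zero
  have hF0 : constantCoeff (X * Qs⁻¹) = 0 := by simp
  -- from the left-inverse hypothesis, get the right-inverse (fixed point) equation
  have h1 : psComp v₀ (psComp (X * Qs⁻¹) v₀) = v₀ := by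
    rw [← mgb_psComp_assoc hF0 hv0 v₀, hinv, mgb_psComp_X_left hv0]
  have hZw : constantCoeff (psComp (X * Qs⁻¹) v₀) = 0 := by
    rw [mgb_constantCoeff_psComp]; exact hF0
  have hw : psComp (X * Qs⁻¹) v₀ = X :=
    mgb_psComp_cancel hv1 hZw PowerSeries.constantCoeff_X
      (h1.trans (mgb_psComp_X_right v₀).symm)
  have hsplit : psComp (X * Qs⁻¹) v₀ = v₀ * psComp Qs⁻¹ v₀ := by
    rw [mgb_psComp_mul hv0, mgb_psComp_X_left hv0]
  have hunit : psComp Qs⁻¹ v₀ * psComp Qs v₀ = 1 := by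
    rw [← mgb_psComp_mul hv0, PowerSeries.inv_mul_cancel Qs hQne, mgb_psComp_one]
  have hfix : v₀ = X * psComp Qs v₀ := by
    conv_lhs => rw [← mul_one v₀, ← hunit, ← mul_assoc, ← hsplit, hw]
  -- coefficient recursion
  have hrec : ∀ d : ℕ, coeff (d+2) v₀
      = ∑ m ∈ range (d+1), coeff (m+1) Qs * coeff (d+1) (v₀^(m+1)) := by
    intro d
    have h := congrArg (coeff (d+2)) hfix
    rw [PowerSeries.coeff_succ_X_mul, mgb_coeff_psComp] at h
    rw [h, Finset.sum_range_succ']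
    simp [PowerSeries.coeff_one]
  -- bound on coefficients of Q
  have hQb : ∀ m : ℕ, |coeff (m+1) Qs| ≤ 2 * C'^(m+1) := by
    intro m
    have e : (PowerSeries.X * (1 + PowerSeries.X) * PowerSeries.mk fun n => t (n + 1))
        = X * (PowerSeries.mk fun n => t (n + 1))
          + X * (X * PowerSeries.mk fun n => t (n + 1)) := by ring
    have hcq : coeff (m+1) Qs
        = t (m+1) + coeff m (X * PowerSeries.mk fun n => t (n + 1)) := by
      rw [hQs, map_add, PowerSeries.coeff_one, if_neg (Nat.succ_ne_zero m), e, map_add,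
        PowerSeries.coeff_succ_X_mul, PowerSeries.coeff_succ_X_mul, PowerSeries.coeff_mk,
        zero_add]
    have htb : ∀ j, 1 ≤ j → |t j| ≤ C'^j := by
      intro j hj
      exact (ht j hj).trans (pow_le_pow_left₀ hC.le hCC' j)
    have hC'pow : C'^m ≤ C'^(m+1) := pow_le_pow_right₀ hC'1 (by omega)
    rcases Nat.eq_zero_or_pos m with rfl | hm
    · have : coeff 0 (X * PowerSeries.mk fun n => t (n + 1)) = 0 := by simp
      rw [hcq, this, add_zero]
      calc |t 1| ≤ C'^1 := htb 1 le_rfl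
        _ ≤ 2 * C'^(0+1) := by rw [pow_one]; nlinarith
    · obtain ⟨j, rfl⟩ : ∃ j, m = j + 1 := ⟨m - 1, by omega⟩
      rw [hcq, PowerSeries.coeff_succ_X_mul, PowerSeries.coeff_mk]
      calc |t (j+1+1) + t (j+1)| ≤ |t (j+1+1)| + |t (j+1)| := abs_add_le _ _
        _ ≤ C'^(j+1+1) + C'^(j+1) := add_le_add (htb _ (by omega)) (htb _ (by omega))
        _ ≤ 2 * C'^(j+1+1) := by nlinarith [pow_le_pow_right₀ hC'1 (show j+1 ≤ j+1+1 by omega)]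
  have h8CK : 8 * C' * K = 1/2 := by
    rw [hKdef, hMdef]
    field_simp
    ring
  have hcoeff0v : coeff 0 v₀ = 0 := by
    rw [PowerSeries.coeff_zero_eq_constantCoeff]; exact hv0
  -- the main inductive bound
  have hvb : ∀ n, 1 ≤ n → |coeff n v₀| ≤ K * M^n * (((n:ℝ))^2)⁻¹ := by
    intro n
    induction n using Nat.strong_induction_on with
    | _ n ih =>
    intro hn
    match n, hn with
    | 1, _ =>
      rw [hv1, abs_one, pow_one]
      norm_num
      linarith [hKM]
    | (d+2), _ =>
      set v' : PowerSeries ℝ :=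
        PowerSeries.mk (fun j => if j ≤ d+1 then coeff j v₀ else 0) with hv'def
      have hagree : ∀ i, i ≤ d+1 → coeff i v' = coeff i v₀ := by
        intro i hi
        rw [hv'def, PowerSeries.coeff_mk, if_pos hi]
      have hv'0 : constantCoeff v' = 0 := by
        rw [← PowerSeries.coeff_zero_eq_constantCoeff, hv'def, PowerSeries.coeff_mk,
          if_pos (by omega), hcoeff0v]
      have hv'b : ∀ j, |coeff j v'| ≤ K * M^j * (((j:ℝ))^2)⁻¹ := by
        intro j
        rw [hv'def, PowerSeries.coeff_mk]
        split_ifs with hj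
        · rcases Nat.eq_zero_or_pos j with rfl | hj1
          · rw [hcoeff0v, abs_zero]
            norm_num
          · exact ih j (by omega) hj1
        · rw [abs_zero]; positivity
      have hvpow := mgb_pow_bound hK0.le hM0.le hv'0 hv'b
      have hfrac : (2*C'*K*2) * ((((d+1:ℕ)):ℝ)^2)⁻¹ ≤ ((((d+2:ℕ)):ℝ)^2)⁻¹ := by
        have h4 : 2*C'*K*2 = 1/4 := by
          rw [hKdef, hMdef]; field_simp; ring
        rw [h4]
        push_cast
        rw [one_div, ← mul_inv]
        apply inv_anti₀ (by positivity)
        nlinarith [Nat.cast_nonneg (α := ℝ) d]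
      rw [hrec d]
      calc |∑ m ∈ range (d+1), coeff (m+1) Qs * coeff (d+1) (v₀^(m+1))|
          ≤ ∑ m ∈ range (d+1), |coeff (m+1) Qs * coeff (d+1) (v₀^(m+1))| :=
            Finset.abs_sum_le_sum_abs _ _
        _ ≤ ∑ m ∈ range (d+1), (2 * C'^(m+1))
              * (K^(m+1) * 8^m * M^(d+1) * ((((d+1:ℕ)):ℝ)^2)⁻¹) := by
            refine Finset.sum_le_sum fun m _ => ?_
            rw [abs_mul,
              show coeff (d+1) (v₀^(m+1)) = coeff (d+1) (v'^(m+1)) from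
                (mgb_pow_coeff_congr hagree (m+1) (d+1) le_rfl).symm]
            exact mul_le_mul (hQb m) (hvpow m (d+1)) (abs_nonneg _) (by positivity)
        _ = (2*C'*K * M^(d+1) * ((((d+1:ℕ)):ℝ)^2)⁻¹)
              * ∑ m ∈ range (d+1), (8*C'*K)^m := by
            rw [Finset.mul_sum]
            refine Finset.sum_congr rfl fun m _ => ?_
            rw [mul_pow, mul_pow]
            ring
        _ = (2*C'*K * M^(d+1) * ((((d+1:ℕ)):ℝ)^2)⁻¹)
              * ∑ m ∈ range (d+1), (1/2:ℝ)^m := by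
            simp only [h8CK]
        _ ≤ (2*C'*K * M^(d+1) * ((((d+1:ℕ)):ℝ)^2)⁻¹) * 2 := by
            refine mul_le_mul_of_nonneg_left ?_ (by positivity)
            simpa using sum_geometric_two_le (d+1)
        _ ≤ K * M^(d+2) * ((((d+2:ℕ)):ℝ)^2)⁻¹ := by
            have hKM' : K * M^(d+2) = M^(d+1) := by
              rw [pow_succ, show K*(M^(d+1)*M) = (K*M)*M^(d+1) by ring, hKM, one_mul]
            rw [hKM', show (2*C'*K * M^(d+1) * ((((d+1:ℕ)):ℝ)^2)⁻¹) * 2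
              = M^(d+1) * ((2*C'*K*2) * ((((d+1:ℕ)):ℝ)^2)⁻¹) by ring]
            exact mul_le_mul_of_nonneg_left hfrac (by positivity)
  -- global bound on all coefficients of v₀
  have hvball : ∀ j : ℕ, |coeff j v₀| ≤ K * M^j * (((j:ℝ))^2)⁻¹ := by
    intro j
    rcases Nat.eq_zero_or_pos j with rfl | hj
    · rw [hcoeff0v, abs_zero]
      norm_num
    · exact hvb j hj
  have hp := mgb_pow_bound hK0.le hM0.le hv0 hvball
  set E : ℝ := 16 * (K+1) * M with hEdef
  have hE1 : (1:ℝ) ≤ E := by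
    rw [hEdef]
    nlinarith
  have hE0 : (0:ℝ) < E := lt_of_lt_of_le one_pos hE1
  refine ⟨E^2 + 1, by positivity, ?_⟩
  intro k hk
  have hlog : coeff (k+1) (psLogOneAdd v₀)
      = ∑ m ∈ range (k+1),
          coeff (m+1) (PowerSeries.mk fun n => if n = 0 then (0:ℝ) else (-1)^(n+1)/n)
            * coeff (k+1) (v₀^(m+1)) := by
    rw [psLogOneAdd, mgb_coeff_psComp, Finset.sum_range_succ']
    simp
  have hL : ∀ m : ℕ,
      |coeff (m+1) (PowerSeries.mk fun n => if n = 0 then (0:ℝ) else (-1)^(n+1)/n)| ≤ 1 := by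
    intro m
    rw [PowerSeries.coeff_mk, if_neg (Nat.succ_ne_zero m)]
    rw [abs_div, abs_pow, abs_neg, abs_one, one_pow]
    rw [Nat.abs_cast]
    rw [div_le_one (by positivity)]
    exact_mod_cast Nat.one_le_iff_ne_zero.mpr (Nat.succ_ne_zero m)
  have hterm : ∀ m ∈ range (k+1),
      |coeff (m+1) (PowerSeries.mk fun n => if n = 0 then (0:ℝ) else (-1)^(n+1)/n)
        * coeff (k+1) (v₀^(m+1))|
      ≤ (8*(K+1))^(k+1) * M^(k+1) := by
    intro m hm
    have hm' : m + 1 ≤ k + 1 := by simp only [Finset.mem_range] at hm; omega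
    rw [abs_mul]
    have h1 : |coeff (k+1) (v₀^(m+1))| ≤ (8*(K+1))^(k+1) * M^(k+1) := by
      refine (hp m (k+1)).trans ?_
      have e1 : K^(m+1) * 8^m ≤ (8*(K+1))^(m+1) := by
        rw [mul_pow]
        have : K^(m+1) ≤ (K+1)^(m+1) := pow_le_pow_left₀ hK0.le (by linarith) _
        have h8 : (8:ℝ)^m ≤ 8^(m+1) := pow_le_pow_right₀ (by norm_num) (by omega)
        nlinarith [pow_nonneg hK0.le (m+1), pow_nonneg (show (0:ℝ) ≤ 8 by norm_num) m,
          pow_nonneg (show (0:ℝ) ≤ K+1 by linarith) (m+1)]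
      have e2 : ((8:ℝ)*(K+1))^(m+1) ≤ (8*(K+1))^(k+1) :=
        pow_le_pow_right₀ (by nlinarith) hm'
      have e3 : ((((k+1:ℕ)):ℝ)^2)⁻¹ ≤ 1 := by
        rw [inv_le_one_iff₀]
        right
        have : (1:ℝ) ≤ (((k+1:ℕ)):ℝ) := by exact_mod_cast Nat.one_le_iff_ne_zero.mpr (Nat.succ_ne_zero k)
        nlinarith
      calc K^(m+1) * 8^m * M^(k+1) * ((((k+1:ℕ)):ℝ)^2)⁻¹
          ≤ K^(m+1) * 8^m * M^(k+1) * 1 := by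
            refine mul_le_mul_of_nonneg_left e3 (by positivity)
        _ = K^(m+1) * 8^m * M^(k+1) := by ring
        _ ≤ (8*(K+1))^(k+1) * M^(k+1) := by
            refine mul_le_mul_of_nonneg_right (e1.trans e2) (by positivity)
    calc |coeff (m+1) (PowerSeries.mk fun n => if n = 0 then (0:ℝ) else (-1)^(n+1)/n)|
          * |coeff (k+1) (v₀^(m+1))|
        ≤ 1 * ((8*(K+1))^(k+1) * M^(k+1)) :=
          mul_le_mul (hL m) h1 (abs_nonneg _) one_pos.le
      _ = (8*(K+1))^(k+1) * M^(k+1) := one_mul _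
  have hsum : |coeff (k+1) (psLogOneAdd v₀)| ≤ E^(k+1) := by
    rw [hlog]
    calc |∑ m ∈ range (k+1), _| ≤ ∑ m ∈ range (k+1),
          |coeff (m+1) (PowerSeries.mk fun n => if n = 0 then (0:ℝ) else (-1)^(n+1)/n)
            * coeff (k+1) (v₀^(m+1))| := Finset.abs_sum_le_sum_abs _ _
      _ ≤ ∑ m ∈ range (k+1), (8*(K+1))^(k+1) * M^(k+1) := Finset.sum_le_sum hterm
      _ = (k+1 : ℝ) * ((8*(K+1))^(k+1) * M^(k+1)) := by
          rw [Finset.sum_const, Finset.card_range, nsmul_eq_mul]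
          push_cast
          ring
      _ ≤ (2:ℝ)^(k+1) * ((8*(K+1))^(k+1) * M^(k+1)) := by
          refine mul_le_mul_of_nonneg_right ?_ (by positivity)
          exact_mod_cast (Nat.lt_two_pow_self (n := k+1)).le
      _ = E^(k+1) := by
          rw [hEdef, ← mul_pow, ← mul_pow]
          congr 1
          ring
  have h2k : E^(k+1) ≤ (E^2)^k := by
    rw [← pow_mul]
    exact pow_le_pow_right₀ hE1 (by omega)
  have hlt : (E^2)^k < (E^2+1)^k :=
    pow_lt_pow_left₀ (lt_add_one _) (by positivity) (by omega)
  exact lt_of_le_of_lt (hsum.trans h2k) hlt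
end

section
/- Let k ≥ 1, let π be a set partition of ℤ/kℤ, and let C be a cycle structure on π, i.e. a set partition of ℤ/kℤ every block of which is a cycle with respect to π: a subset B ⊆ ℤ/kℤ of size m is a cycle with respect to π if B admits an enumeration b_0, …, b_{m−1} such that for every j (indices taken mod m), the elements b_j + 1 and b_{j+1} belong to the same block of π. Then (number of blocks of π) + (number of blocks of C) ≤ k + 1. -/
/-- A finset `B ⊆ ℤ/kℤ` is a *cycle* with respect to a set partition `π` of `ℤ/kℤ`
if `B` admits an enumeration `b_0, …, b_{m-1}` (`m = |B|`, indices mod `m`) such that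
for every `j`, the elements `b_j + 1` and `b_{j+1}` lie in the same block of `π`.
The enumeration is encoded as an `m`-periodic map `b : ℕ → ZMod k` injective on
`{0, …, m-1}` with image `B`. -/
def IsCycleWrt (k : ℕ) [NeZero k] (π : Finpartition (Finset.univ : Finset (ZMod k)))
    (B : Finset (ZMod k)) : Prop :=
  ∃ b : ℕ → ZMod k,
    (∀ j, b (j + B.card) = b j) ∧
    Set.InjOn b (Set.Iio B.card) ∧
    (B : Set (ZMod k)) = b '' Set.Iio B.card ∧
    ∀ j : ℕ, ∃ blk ∈ π.parts, b j + 1 ∈ blk ∧ b (j + 1) ∈ blk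

/-- If `π` is a set partition of `ℤ/kℤ` (`k ≥ 1`) and `C` is a cycle
structure on `π` (a set partition of `ℤ/kℤ` all of whose blocks are cycles with respect
to `π`), then `(number of blocks of π) + (number of blocks of C) ≤ k + 1`. -/
theorem blocks_add_cycles_le
    (k : ℕ) [NeZero k] (hk : 1 ≤ k)
    (π C : Finpartition (Finset.univ : Finset (ZMod k)))
    (hC : ∀ B ∈ C.parts, IsCycleWrt k π B) :
    π.parts.card + C.parts.card ≤ k + 1 := by
  classical
  -- minimal "time" (ZMod.val) of a block
  set mt : Finset (ZMod k) → ℕ := fun P =>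
    if h : P.Nonempty then (P.image ZMod.val).min' (h.image _) else 0 with hmtdef
  have hmtle : ∀ P : Finset (ZMod k), ∀ a ∈ P, mt P ≤ a.val := by
    intro P a ha
    have hne : P.Nonempty := ⟨a, ha⟩
    simp only [hmtdef, dif_pos hne]
    exact Finset.min'_le _ _ (Finset.mem_image_of_mem _ ha)
  have hmtmem : ∀ P : Finset (ZMod k), P.Nonempty → ∃ a ∈ P, a.val = mt P := by
    intro P hne
    simp only [hmtdef, dif_pos hne]
    have := Finset.min'_mem (P.image ZMod.val) (hne.image _)
    rcases Finset.mem_image.1 this with ⟨a, ha, hav⟩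
    exact ⟨a, ha, hav⟩
  -- first-entry edges
  set FE : Finset (ZMod k) :=
    Finset.univ.filter (fun x : ZMod k => ∃ Q ∈ π.parts, x + 1 ∈ Q ∧ mt Q = x.val + 1)
    with hFEdef
  have hmemFE : ∀ x : ZMod k,
      x ∈ FE ↔ ∃ Q ∈ π.parts, x + 1 ∈ Q ∧ mt Q = x.val + 1 := by
    intro x; simp [hFEdef]
  -- Step A : π.parts.card ≤ FE.card + 1
  have h0 : (0 : ZMod k) ∈ (Finset.univ : Finset (ZMod k)) := Finset.mem_univ _
  have hP0 : π.part 0 ∈ π.parts := π.part_mem.2 h0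
  have hstepA : π.parts.card ≤ FE.card + 1 := by
    have hinj : ∀ P ∈ π.parts.erase (π.part 0),
        (((mt P - 1 : ℕ) : ZMod k)) ∈ FE := by
      intro P hP
      have hPmem : P ∈ π.parts := Finset.mem_of_mem_erase hP
      have hPne : P.Nonempty := π.nonempty_of_mem_parts hPmem
      obtain ⟨a, haP, hav⟩ := hmtmem P hPne
      have hmtlt : mt P < k := hav ▸ a.val_lt
      have hmt1 : 1 ≤ mt P := by
        by_contra h
        have h0' : mt P = 0 := by omega
        have : a = 0 := by
          have := hav.trans h0'
          exact (ZMod.val_eq_zero a).1 this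
        subst this
        have : P = π.part 0 :=
          π.eq_of_mem_parts hPmem hP0 haP (π.mem_part h0)
        exact (Finset.ne_of_mem_erase hP) this
      have hcast : (((mt P - 1 : ℕ) : ZMod k)) + 1 = a := by
        have : ((mt P - 1 : ℕ) : ZMod k) + 1 = ((mt P - 1 + 1 : ℕ) : ZMod k) := by
          push_cast; ring
        rw [this, Nat.sub_add_cancel hmt1, ← hav, ZMod.natCast_val, ZMod.cast_id]
      have hval : (((mt P - 1 : ℕ) : ZMod k)).val = mt P - 1 :=
        ZMod.val_cast_of_lt (by omega)
      rw [hmemFE]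
      exact ⟨P, hPmem, hcast ▸ haP, by omega⟩
    have hinj2 : Set.InjOn (fun P => ((mt P - 1 : ℕ) : ZMod k))
        (π.parts.erase (π.part 0) : Set (Finset (ZMod k))) := by
      intro P hP P' hP' hEq
      simp only [Finset.coe_erase, Set.mem_diff, Finset.mem_coe] at hP hP'
      have hPmem : P ∈ π.parts := hP.1
      have hP'mem : P' ∈ π.parts := hP'.1
      have hPne : P.Nonempty := π.nonempty_of_mem_parts hPmem
      have hP'ne : P'.Nonempty := π.nonempty_of_mem_parts hP'mem
      obtain ⟨a, haP, hav⟩ := hmtmem P hPne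
      obtain ⟨a', haP', hav'⟩ := hmtmem P' hP'ne
      have hmtlt : mt P < k := hav ▸ a.val_lt
      have hmtlt' : mt P' < k := hav' ▸ a'.val_lt
      have : mt P - 1 = mt P' - 1 := by
        have := congrArg ZMod.val hEq
        rwa [ZMod.val_cast_of_lt (by omega), ZMod.val_cast_of_lt (by omega)] at this
      -- need mt P ≥ 1 on both : reuse
      have hmt1 : ∀ Q, Q ∈ π.parts → Q ≠ π.part 0 → ∀ c ∈ Q, c.val = mt Q → 1 ≤ mt Q := by
        intro Q hQ hQne c hc hcv
        by_contra h
        have h0' : mt Q = 0 := by omega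
        have : c = 0 := (ZMod.val_eq_zero c).1 (hcv.trans h0')
        subst this
        exact hQne (π.eq_of_mem_parts hQ hP0 hc (π.mem_part h0))
      have h1 : 1 ≤ mt P := hmt1 P hPmem (by simpa using hP.2) a haP hav
      have h1' : 1 ≤ mt P' := hmt1 P' hP'mem (by simpa using hP'.2) a' haP' hav'
      have hmteq : mt P = mt P' := by omega
      have haa' : a = a' := by
        have : a.val = a'.val := by rw [hav, hav', hmteq]
        exact ZMod.val_injective k this
      exact π.eq_of_mem_parts hPmem hP'mem haP (haa' ▸ haP')
    have := Finset.card_le_card_of_injOn _ hinj hinj2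
    have herase : (π.parts.erase (π.part 0)).card = π.parts.card - 1 :=
      Finset.card_erase_of_mem hP0
    have hpos : 1 ≤ π.parts.card := Finset.card_pos.2 ⟨_, hP0⟩
    omega
  -- Step B : every cycle contains a non-first-entry edge
  have hstepB : ∀ B ∈ C.parts, ∃ x ∈ B, x ∉ FE := by
    intro B hB
    obtain ⟨b, hper, hinj, himg, hedge⟩ := hC B hB
    have hBne : B.Nonempty := C.nonempty_of_mem_parts hB
    have hm : 1 ≤ B.card := Finset.card_pos.2 hBne
    obtain ⟨a, haB, hamin⟩ := B.exists_min_image ZMod.val hBne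
    have haimg : a ∈ b '' Set.Iio B.card := by rw [← himg]; exact haB
    obtain ⟨l, hl, hbl⟩ := haimg
    have hl : l < B.card := hl
    set l' : ℕ := if l = 0 then B.card - 1 else l - 1 with hl'def
    have hl'lt : l' < B.card := by simp only [hl'def]; split <;> omega
    have hsucc : b (l' + 1) = a := by
      simp only [hl'def]
      split
      · next h => 
        subst h
        have : B.card - 1 + 1 = 0 + B.card := by omega
        rw [this, hper 0, ← hbl]
      · next h =>
        have : l - 1 + 1 = l := by omega
        rw [this, hbl]
    have hxB : b l' ∈ B := by
      have : b l' ∈ b '' Set.Iio B.card := ⟨l', hl'lt, rfl⟩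
      rw [← himg] at this; exact this
    refine ⟨b l', hxB, ?_⟩
    intro hxFE
    rw [hmemFE] at hxFE
    obtain ⟨Q, hQ, hxQ, hmtQ⟩ := hxFE
    obtain ⟨blk, hblk, h1, h2⟩ := hedge l'
    have hQblk : Q = blk := π.eq_of_mem_parts hQ hblk hxQ h1
    rw [hsucc] at h2
    have h3 : mt Q ≤ a.val := hQblk ▸ hmtle blk a h2
    have h4 : a.val ≤ (b l').val := hamin _ hxB
    omega
  -- Step C : C.parts.card + FE.card ≤ k
  have hstepC : C.parts.card + FE.card ≤ k := by
    choose f hfB hfFE using hstepB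
    have hcard : C.parts.card ≤ (Finset.univ \ FE).card := by
      apply Finset.card_le_card_of_injOn (fun B => if hB : B ∈ C.parts then f B hB else 0)
      · intro B hB
        simp only [dif_pos hB]
        exact Finset.mem_sdiff.2 ⟨Finset.mem_univ _, by rw [dif_pos (Finset.mem_coe.1 hB)]; exact hfFE B hB⟩
      · intro B hB B' hB' hEq
        simp only [Finset.mem_coe] at hB hB'
        simp only [dif_pos hB, dif_pos hB'] at hEq
        exact C.eq_of_mem_parts hB hB' (hfB B hB) (hEq ▸ hfB B' hB')
    have hsd : (Finset.univ \ FE).card = k - FE.card := by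
      rw [Finset.card_sdiff_of_subset (Finset.subset_univ _)]
      simp [ZMod.card]
    have hFEle : FE.card ≤ k := by
      have := Finset.card_le_card (Finset.subset_univ FE)
      simpa [ZMod.card] using this
    omega
  omega
end

section
/- Fix γ > 1. Then the function d(x) := (1/π) · arccos((x + γ)/(2√(γ(x+1)))), defined for x in the interval [γ − 2√γ, γ + 2√γ], is nonnegative there and integrates to 1: ∫_{γ−2√γ}^{γ+2√γ} (1/π) arccos((x + γ)/(2√(γ(x+1)))) dx = 1; in particular, for γ > 1 the quantity (x+γ)/(2√(γ(x+1))) lies in [−1, 1] for all x ∈ [γ − 2√γ, γ + 2√γ], so d is a probability density supported on this interval. -/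
open Real

set_option maxHeartbeats 1000000 in
noncomputable def planF (γ : ℝ) (x : ℝ) : ℝ :=
  x * Real.arccos ((x + γ) / (2 * Real.sqrt (γ * (x + 1))))
  - Real.sqrt (4 * γ - (x - γ) ^ 2) / 2
  + Real.arcsin ((x - γ) / (2 * Real.sqrt γ)) / 2
  + Real.arcsin (((γ + 1) * (x - γ) + 4 * γ) / (2 * Real.sqrt γ * (x + 1))) / 2

lemma plan_sqrt_one_lt {γ : ℝ} (hγ : 1 < γ) : 1 < Real.sqrt γ := by
  have h := Real.sq_sqrt (by linarith : (0:ℝ) ≤ γ)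
  nlinarith [Real.sqrt_nonneg γ]

set_option maxHeartbeats 1000000 in
lemma planF_deriv (γ : ℝ) (hγ : 1 < γ) (x : ℝ)
    (hx : x ∈ Set.Ioo (γ - 2 * Real.sqrt γ) (γ + 2 * Real.sqrt γ)) :
    HasDerivAt (planF γ)
      (Real.arccos ((x + γ) / (2 * Real.sqrt (γ * (x + 1))))) x := by
  obtain ⟨hxl, hxr⟩ := hx
  set s := Real.sqrt γ with hsdef
  have hγ0 : (0:ℝ) < γ := by linarith
  have hs : s ^ 2 = γ := Real.sq_sqrt hγ0.le
  have hs1 : 1 < s := plan_sqrt_one_lt hγ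
  have hs0 : 0 < s := by linarith
  have hsm : 0 < (s - 1) ^ 2 := pow_pos (by linarith) 2
  have hx1 : 0 < x + 1 := by nlinarith
  have hR : 0 < 4 * γ - (x - γ) ^ 2 := by
    nlinarith [mul_pos (show (0:ℝ) < γ + 2 * s - x by linarith)
      (show (0:ℝ) < x - (γ - 2 * s) by linarith)]
  have hQ : 0 < γ * (x + 1) := mul_pos hγ0 hx1
  set sQ := Real.sqrt (γ * (x + 1)) with hsQdef
  set sR := Real.sqrt (4 * γ - (x - γ) ^ 2) with hsRdef
  have hsQ : sQ ^ 2 = γ * (x + 1) := Real.sq_sqrt hQ.le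
  have hsR : sR ^ 2 = 4 * γ - (x - γ) ^ 2 := Real.sq_sqrt hR.le
  have hsQ0 : 0 < sQ := Real.sqrt_pos.2 hQ
  have hsR0 : 0 < sR := Real.sqrt_pos.2 hR
  have hxγ : 0 < x + γ := by nlinarith [mul_pos hs0 (show (0:ℝ) < s - 1 by linarith)]
  -- g strictly between -1 and 1
  have hglt : (x + γ) / (2 * sQ) < 1 := by
    rw [div_lt_one (by positivity)]
    nlinarith [hsQ, hsQ0, hxγ]
  have hgpos : 0 < (x + γ) / (2 * sQ) := by positivity
  have hgne1 : (x + γ) / (2 * sQ) ≠ 1 := ne_of_lt hglt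
  have hgnem1 : (x + γ) / (2 * sQ) ≠ -1 := by linarith
  -- arcsin arguments strictly inside (-1, 1)
  have hu1l : -1 < (x - γ) / (2 * s) := by
    rw [lt_div_iff₀ (by positivity)]; linarith
  have hu1r : (x - γ) / (2 * s) < 1 := by
    rw [div_lt_one (by positivity)]; linarith
  have hu2l : -1 < ((γ + 1) * (x - γ) + 4 * γ) / (2 * s * (x + 1)) := by
    rw [lt_div_iff₀ (by positivity)]
    have key : (γ + 1) * (x - γ) + 4 * γ + 2 * s * (x + 1)
        = (s + 1) ^ 2 * (x - (γ - 2 * s)) := by rw [← hs]; ring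
    nlinarith [mul_pos (pow_pos (show (0:ℝ) < s + 1 by linarith) 2)
      (show (0:ℝ) < x - (γ - 2 * s) by linarith), key]
  have hu2r : ((γ + 1) * (x - γ) + 4 * γ) / (2 * s * (x + 1)) < 1 := by
    rw [div_lt_one (by positivity)]
    have key : 2 * s * (x + 1) - ((γ + 1) * (x - γ) + 4 * γ)
        = (s - 1) ^ 2 * ((γ + 2 * s) - x) := by rw [← hs]; ring
    nlinarith [mul_pos hsm (show (0:ℝ) < (γ + 2 * s) - x by linarith), key]
  -- sqrt simplifications
  have e1 : Real.sqrt (1 - ((x + γ) / (2 * sQ)) ^ 2) = sR / (2 * sQ) := by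
    rw [show 1 - ((x + γ) / (2 * sQ)) ^ 2 = (sR / (2 * sQ)) ^ 2 by
      field_simp
      linear_combination 4 * hsQ - hsR]
    exact Real.sqrt_sq (by positivity)
  have e2 : Real.sqrt (1 - ((x - γ) / (2 * s)) ^ 2) = sR / (2 * s) := by
    rw [show 1 - ((x - γ) / (2 * s)) ^ 2 = (sR / (2 * s)) ^ 2 by
      field_simp
      linear_combination 4 * hs - hsR]
    exact Real.sqrt_sq (by positivity)
  have e3 : Real.sqrt (1 - (((γ + 1) * (x - γ) + 4 * γ) / (2 * s * (x + 1))) ^ 2)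
      = (γ - 1) * sR / (2 * s * (x + 1)) := by
    rw [show 1 - (((γ + 1) * (x - γ) + 4 * γ) / (2 * s * (x + 1))) ^ 2
        = ((γ - 1) * sR / (2 * s * (x + 1))) ^ 2 by
      field_simp
      linear_combination 4 * (x + 1) ^ 2 * hs - (γ - 1) ^ 2 * hsR]
    have hγ1 : (0:ℝ) ≤ γ - 1 := by linarith
    exact Real.sqrt_sq (by positivity)
  -- derivative of the inner quotient g
  have hlin : HasDerivAt (fun y : ℝ => γ * (y + 1)) γ x := by
    simpa using ((hasDerivAt_id x).add_const 1).const_mul γ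
  have hsqQ : HasDerivAt (fun y : ℝ => Real.sqrt (γ * (y + 1))) (γ / (2 * sQ)) x :=
    hlin.sqrt hQ.ne'
  have hg : HasDerivAt (fun y : ℝ => (y + γ) / (2 * Real.sqrt (γ * (y + 1))))
      ((1 * (2 * sQ) - (x + γ) * (2 * (γ / (2 * sQ)))) / (2 * sQ) ^ 2) x :=
    ((hasDerivAt_id x).add_const γ).div (hsqQ.const_mul 2) (by positivity)
  have harccos : HasDerivAt
      (fun y : ℝ => Real.arccos ((y + γ) / (2 * Real.sqrt (γ * (y + 1)))))
      (-(1 / Real.sqrt (1 - ((x + γ) / (2 * sQ)) ^ 2)) *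
        ((1 * (2 * sQ) - (x + γ) * (2 * (γ / (2 * sQ)))) / (2 * sQ) ^ 2)) x :=
    by have := (Real.hasDerivAt_arccos hgnem1 hgne1).comp x hg; exact this
  -- the four pieces with cleaned-up derivatives
  have h1 : HasDerivAt
      (fun y : ℝ => y * Real.arccos ((y + γ) / (2 * Real.sqrt (γ * (y + 1)))))
      (Real.arccos ((x + γ) / (2 * sQ)) - x * (x + 2 - γ) / (2 * (x + 1) * sR)) x := by
    have h := (hasDerivAt_id x).mul harccos
    refine h.congr_deriv ?_
    symm
    simp only [id_eq]
    rw [e1, ← hsQdef]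
    generalize Real.arccos ((x + γ) / (2 * sQ)) = A
    field_simp
    linear_combination (x * (γ + x)) * hsQ
  have h2 : HasDerivAt (fun y : ℝ => Real.sqrt (4 * γ - (y - γ) ^ 2) / 2)
      (-(x - γ) / (2 * sR)) x := by
    have hinner : HasDerivAt (fun y : ℝ => 4 * γ - (y - γ) ^ 2) (-(2 * (x - γ))) x := by
      simpa using (((hasDerivAt_id x).sub_const γ).pow 2).const_sub (4 * γ)
    have h := (hinner.sqrt hR.ne').div_const 2
    refine h.congr_deriv ?_
    symm
    rw [← hsRdef]
    field_simp
  have h3 : HasDerivAt (fun y : ℝ => Real.arcsin ((y - γ) / (2 * s)) / 2)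
      (1 / (2 * sR)) x := by
    have hinner : HasDerivAt (fun y : ℝ => (y - γ) / (2 * s)) (1 / (2 * s)) x := by
      simpa using ((hasDerivAt_id x).sub_const γ).div_const (2 * s)
    have h := ((Real.hasDerivAt_arcsin (ne_of_gt hu1l) (ne_of_lt hu1r)).comp x hinner).div_const 2
    refine h.congr_deriv ?_
    symm
    rw [e2]
    field_simp
  have h4 : HasDerivAt
      (fun y : ℝ => Real.arcsin (((γ + 1) * (y - γ) + 4 * γ) / (2 * s * (y + 1))) / 2)
      ((γ - 1) / (2 * (x + 1) * sR)) x := by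
    have hnum : HasDerivAt (fun y : ℝ => (γ + 1) * (y - γ) + 4 * γ) (γ + 1) x := by
      simpa using (((hasDerivAt_id x).sub_const γ).const_mul (γ + 1)).add_const (4 * γ)
    have hden : HasDerivAt (fun y : ℝ => 2 * s * (y + 1)) (2 * s) x := by
      simpa using ((hasDerivAt_id x).add_const 1).const_mul (2 * s)
    have hu2 : HasDerivAt
        (fun y : ℝ => ((γ + 1) * (y - γ) + 4 * γ) / (2 * s * (y + 1)))
        (((γ + 1) * (2 * s * (x + 1)) - ((γ + 1) * (x - γ) + 4 * γ) * (2 * s)) /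
          (2 * s * (x + 1)) ^ 2) x := hnum.div hden (by positivity)
    have h := ((Real.hasDerivAt_arcsin (ne_of_gt hu2l) (ne_of_lt hu2r)).comp x hu2).div_const 2
    refine h.congr_deriv ?_
    symm
    rw [e3]
    have hne : γ - 1 ≠ 0 := ne_of_gt (by linarith)
    field_simp
    ring_nf
  have hF : HasDerivAt (planF γ)
      ((Real.arccos ((x + γ) / (2 * sQ)) - x * (x + 2 - γ) / (2 * (x + 1) * sR)
        - -(x - γ) / (2 * sR) + 1 / (2 * sR)) + (γ - 1) / (2 * (x + 1) * sR)) x :=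
    ((h1.sub h2).add h3).add h4
  convert hF using 1
  field_simp
  ring

lemma planF_at_right (γ : ℝ) (hγ : 1 < γ) :
    planF γ (γ + 2 * Real.sqrt γ) = π / 2 := by
  set s := Real.sqrt γ with hsdef
  have hγ0 : (0:ℝ) < γ := by linarith
  have hs : s ^ 2 = γ := Real.sq_sqrt hγ0.le
  have hs1 : 1 < s := plan_sqrt_one_lt hγ
  have hs0 : 0 < s := by linarith
  have hb1 : Real.sqrt (γ * (γ + 2 * s + 1)) = s * (s + 1) := by
    rw [show γ * (γ + 2 * s + 1) = (s * (s + 1)) ^ 2 by rw [← hs]; ring]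
    exact Real.sqrt_sq (by positivity)
  have hb2 : (γ + 2 * s + γ) / (2 * (s * (s + 1))) = 1 := by
    rw [div_eq_one_iff_eq (by positivity)]
    linear_combination (-2:ℝ) * hs
  have hb3 : 4 * γ - (γ + 2 * s - γ) ^ 2 = 0 := by linear_combination (-4:ℝ) * hs
  have hb4 : (γ + 2 * s - γ) / (2 * s) = 1 := by
    rw [show γ + 2 * s - γ = 2 * s by ring]
    exact div_self (by positivity)
  have hb5 : ((γ + 1) * (γ + 2 * s - γ) + 4 * γ) / (2 * s * (γ + 2 * s + 1)) = 1 := by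
    rw [div_eq_one_iff_eq (ne_of_gt (mul_pos (by positivity) (by linarith)))]
    linear_combination (-4 : ℝ) * hs
  rw [planF, hb1, hb2, hb3, hb4, hb5, Real.arccos_one, Real.sqrt_zero, Real.arcsin_one]
  ring

lemma planF_at_left (γ : ℝ) (hγ : 1 < γ) :
    planF γ (γ - 2 * Real.sqrt γ) = -(π / 2) := by
  set s := Real.sqrt γ with hsdef
  have hγ0 : (0:ℝ) < γ := by linarith
  have hs : s ^ 2 = γ := Real.sq_sqrt hγ0.le
  have hs1 : 1 < s := plan_sqrt_one_lt hγ
  have hs0 : 0 < s := by linarith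
  have hss : 0 < s * (s - 1) := mul_pos hs0 (by linarith)
  have ha1 : Real.sqrt (γ * (γ - 2 * s + 1)) = s * (s - 1) := by
    rw [show γ * (γ - 2 * s + 1) = (s * (s - 1)) ^ 2 by rw [← hs]; ring]
    exact Real.sqrt_sq hss.le
  have ha2 : (γ - 2 * s + γ) / (2 * (s * (s - 1))) = 1 := by
    rw [div_eq_one_iff_eq (by positivity)]
    linear_combination (-2:ℝ) * hs
  have ha3 : 4 * γ - (γ - 2 * s - γ) ^ 2 = 0 := by linear_combination (-4:ℝ) * hs
  have ha4 : (γ - 2 * s - γ) / (2 * s) = -1 := by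
    rw [div_eq_iff (by positivity : (2 * s : ℝ) ≠ 0)]
    ring
  have ha5 : ((γ + 1) * (γ - 2 * s - γ) + 4 * γ) / (2 * s * (γ - 2 * s + 1)) = -1 := by
    have hden : (0:ℝ) < 2 * s * (γ - 2 * s + 1) := by
      apply mul_pos (by positivity)
      nlinarith
    rw [div_eq_iff hden.ne']
    linear_combination (-4 : ℝ) * hs
  rw [planF, ha1, ha2, ha3, ha4, ha5, Real.arccos_one, Real.sqrt_zero, Real.arcsin_neg_one]
  ring

set_option maxHeartbeats 1000000 in
/-- For `γ > 1`, the function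
`d(x) = (1/π) arccos((x+γ)/(2√(γ(x+1))))` on `[γ - 2√γ, γ + 2√γ]` is a probability
density: the argument of `arccos` lies in `[-1, 1]` there, `d ≥ 0`, and
`∫_{γ-2√γ}^{γ+2√γ} d(x) dx = 1`. -/
theorem plancherel_density_integral_eq_one (γ : ℝ) (hγ : 1 < γ) :
    (∀ x ∈ Set.Icc (γ - 2 * Real.sqrt γ) (γ + 2 * Real.sqrt γ),
      (x + γ) / (2 * Real.sqrt (γ * (x + 1))) ∈ Set.Icc (-1 : ℝ) 1 ∧
      0 ≤ (1 / π) * Real.arccos ((x + γ) / (2 * Real.sqrt (γ * (x + 1))))) ∧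
    ∫ x in (γ - 2 * Real.sqrt γ)..(γ + 2 * Real.sqrt γ),
        (1 / π) * Real.arccos ((x + γ) / (2 * Real.sqrt (γ * (x + 1)))) = 1 := by

  have hγ0 : (0:ℝ) < γ := by linarith
  have hs : Real.sqrt γ ^ 2 = γ := Real.sq_sqrt hγ0.le
  have hs1 : 1 < Real.sqrt γ := plan_sqrt_one_lt hγ
  have hs0 : 0 < Real.sqrt γ := by linarith
  set s := Real.sqrt γ with hsdef
  have hx1 : ∀ x ∈ Set.Icc (γ - 2 * s) (γ + 2 * s), 0 < x + 1 := by
    intro x hx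
    have := hx.1
    nlinarith [pow_pos (show (0:ℝ) < s - 1 by linarith) 2]
  have hQpos : ∀ x ∈ Set.Icc (γ - 2 * s) (γ + 2 * s), 0 < γ * (x + 1) :=
    fun x hx => mul_pos hγ0 (hx1 x hx)
  constructor
  · intro x hx
    obtain ⟨hxl, hxr⟩ := hx
    have hx1' : 0 < x + 1 := hx1 x ⟨hxl, hxr⟩
    have hQ : 0 < γ * (x + 1) := mul_pos hγ0 hx1'
    have hsQ : Real.sqrt (γ * (x + 1)) ^ 2 = γ * (x + 1) := Real.sq_sqrt hQ.le
    have hsQ0 : 0 < Real.sqrt (γ * (x + 1)) := Real.sqrt_pos.2 hQ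
    have hxγ : 0 ≤ x + γ := by
      nlinarith [mul_pos hs0 (show (0:ℝ) < s - 1 by linarith)]
    refine ⟨⟨le_trans (by norm_num : (-1:ℝ) ≤ 0) (by positivity), ?_⟩,
      mul_nonneg (by positivity) (Real.arccos_nonneg _)⟩
    rw [div_le_one (by positivity)]
    nlinarith [hsQ, hsQ0, hxγ]
  · have hab : γ - 2 * s ≤ γ + 2 * s := by linarith
    have hgc : ContinuousOn (fun x : ℝ => (x + γ) / (2 * Real.sqrt (γ * (x + 1))))
        (Set.Icc (γ - 2 * s) (γ + 2 * s)) := by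
      apply ContinuousOn.div
      · fun_prop
      · fun_prop
      · intro x hx
        have := hQpos x hx
        have : 0 < Real.sqrt (γ * (x + 1)) := Real.sqrt_pos.2 this
        positivity
    have hfc : ContinuousOn
        (fun x : ℝ => (1 / π) * Real.arccos ((x + γ) / (2 * Real.sqrt (γ * (x + 1)))))
        (Set.Icc (γ - 2 * s) (γ + 2 * s)) :=
      continuousOn_const.mul (Real.continuous_arccos.comp_continuousOn hgc)
    have hFc : ContinuousOn (fun x : ℝ => (1 / π) * planF γ x)
        (Set.Icc (γ - 2 * s) (γ + 2 * s)) := by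
      apply continuousOn_const.mul
      unfold planF
      apply ContinuousOn.add
      apply ContinuousOn.add
      apply ContinuousOn.sub
      · exact continuousOn_id.mul (Real.continuous_arccos.comp_continuousOn hgc)
      · apply Continuous.continuousOn
        have : Continuous fun x : ℝ => 4 * γ - (x - γ) ^ 2 := by fun_prop
        exact (Real.continuous_sqrt.comp this).div_const 2
      · apply Continuous.continuousOn
        have : Continuous fun x : ℝ => (x - γ) / (2 * s) := by fun_prop
        exact (Real.continuous_arcsin.comp this).div_const 2
      · apply ContinuousOn.div_const
        apply Real.continuous_arcsin.comp_continuousOn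
        apply ContinuousOn.div
        · fun_prop
        · fun_prop
        · intro x hx
          have := hx1 x hx
          positivity
    have hderiv : ∀ x ∈ Set.Ioo (γ - 2 * s) (γ + 2 * s),
        HasDerivAt (fun x : ℝ => (1 / π) * planF γ x)
          ((1 / π) * Real.arccos ((x + γ) / (2 * Real.sqrt (γ * (x + 1))))) x :=
      fun x hx => (planF_deriv γ hγ x hx).const_mul (1 / π)
    have hint : IntervalIntegrable
        (fun x : ℝ => (1 / π) * Real.arccos ((x + γ) / (2 * Real.sqrt (γ * (x + 1)))))
        MeasureTheory.volume (γ - 2 * s) (γ + 2 * s) :=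
      hfc.intervalIntegrable_of_Icc hab
    rw [intervalIntegral.integral_eq_sub_of_hasDerivAt_of_le hab hFc hderiv hint]
    rw [hsdef, planF_at_right γ hγ, planF_at_left γ hγ]
    have hπ : π ≠ 0 := Real.pi_ne_zero
    field_simp
    norm_num
end
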